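/- arXiv:1711.04261 — 3 statements merged into one kernel-verified Lean document; each statement's English description precedes it below -/
import Mathlib

section
/- Let 𝕜 be a commutative unital ring and let R be a unital 𝕜-algebra with an idempotent e satisfying e ≠ 0 and e ≠ 1; put f = 1 − e, and assume fRe = {0} (so R is a triangular algebra); set A = eRe, B = fRf, M = eRf. A sequence L = {L_k}_{k∈ℕ₀} of 𝕜-linear maps on R with L_0 = id_R is a Lie higher derivation on R if and only if there exist elements m_j ∈ M (j ≥ 1) and, for each k ≥ 1, 𝕜-linear maps p_{1k} : A → A, p_{2k} : B → Z(A), q_{1k} : A → Z(B), q_{2k} : B → B, f_{3k} : M → M such that, with the conventions p_{10} = id_A, q_{20} = id_B, p_{20} = 0, q_{10} = 0, f_{30} = id_M, the following hold for every k ≥ 1: (0) L_k(a + m + b) = p_{1k}(a) + p_{2k}(b) + Σ_{i+j=k, j≥1} ((p_{1i}(a) + p_{2i}(b)) m_j − m_j (q_{1i}(a) + q_{2i}(b))) + f_{3k}(m) + q_{1k}(a) + q_{2k}(b) for all a ∈ A, m ∈ M, b ∈ B; (1) {p_{1k}}_{k∈ℕ₀} and {q_{2k}}_{k∈ℕ₀}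 are Lie higher derivations on A and on B, respectively; (2) q_{1k}([a,a']) = 0 for all a, a' ∈ A and p_{2k}([b,b']) = 0 for all b, b' ∈ B; (3) f_{3k}(am) = Σ_{i+j=k} (p_{1i}(a) f_{3j}(m) − f_{3j}(m) q_{1i}(a)) and f_{3k}(mb) = Σ_{i+j=k} (f_{3j}(m) q_{2i}(b) − p_{2i}(b) f_{3j}(m)) for all a ∈ A, b ∈ B, m ∈ M. -/
open Finset

section Defs

variable (𝕜 R : Type*) [CommRing 𝕜] [Ring R] [Algebra 𝕜 R]

/-- A higher derivation on a unital `𝕜`-algebra `R`: a sequence `D` of `𝕜`-linear maps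
with `D 0 = id` and `D k (x*y) = ∑_{i+j=k} D i x * D j y`. -/
def IsHigherDerivation (D : ℕ → R →ₗ[𝕜] R) : Prop :=
  D 0 = LinearMap.id ∧
    ∀ (k : ℕ) (x y : R),
      D k (x * y) = ∑ ij ∈ Finset.HasAntidiagonal.antidiagonal k, D ij.1 x * D ij.2 y

/-- A Lie higher derivation on a unital `𝕜`-algebra `R`: a sequence `L` of `𝕜`-linear maps
with `L 0 = id` and `L k [x,y] = ∑_{i+j=k} [L i x, L j y]`. -/
def IsLieHigherDerivation (L : ℕ → R →ₗ[𝕜] R) : Prop :=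
  L 0 = LinearMap.id ∧
    ∀ (k : ℕ) (x y : R),
      L k (x * y - y * x) =
        ∑ ij ∈ Finset.HasAntidiagonal.antidiagonal k,
          (L ij.1 x * L ij.2 y - L ij.2 y * L ij.1 x)

/-- A Lie higher derivation `L` is proper if `L k = D k + τ k` (k ≥ 1) for some higher
derivation `D` and central-valued linear maps `τ k` vanishing on all commutators. -/
def IsProperLHD (L : ℕ → R →ₗ[𝕜] R) : Prop :=
  ∃ D τ : ℕ → R →ₗ[𝕜] R,
    IsHigherDerivation 𝕜 R D ∧
      (∀ k, 1 ≤ k → ∀ x : R, τ k x ∈ Set.center R) ∧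
      (∀ k, 1 ≤ k → ∀ x y : R, τ k (x * y - y * x) = 0) ∧
      (∀ k, 1 ≤ k → L k = D k + τ k)

/-- `R` has the LHD property: every Lie higher derivation on `R` is proper. -/
def HasLHDProperty : Prop :=
  ∀ L : ℕ → R →ₗ[𝕜] R, IsLieHigherDerivation 𝕜 R L → IsProperLHD 𝕜 R L

end Defs

section Peirce

variable {R : Type*} [Ring R]

/-- The Peirce corner `eRf` of a ring `R`. -/
def corner (e f : R) : Set R := Set.range fun r => e * r * f

/-- The center of the corner algebra `eRe`:
elements of `eRe` commuting with every element of `eRe`. -/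
def cornerCenter (e : R) : Set R :=
  {x ∈ corner e e | ∀ y ∈ corner e e, x * y = y * x}

/-- Weak faithfulness of the generalized matrix algebra determined by the idempotent `e`
(with `A = eRe`, `B = fRf`, `M = eRf`, `N = fRe`, `f = 1 - e`):
`aM = 0 = Na → a = 0` and `Mb = 0 = bN → b = 0`. -/
def WeaklyFaithful (e : R) : Prop :=
  (∀ a ∈ corner e e,
      (∀ m ∈ corner e (1 - e), a * m = 0) →
        (∀ n ∈ corner (1 - e) e, n * a = 0) → a = 0) ∧
    ∀ b ∈ corner (1 - e) (1 - e),
      (∀ m ∈ corner e (1 - e), m * b = 0) →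
        (∀ n ∈ corner (1 - e) e, b * n = 0) → b = 0

/-- The corner algebra `eRe` contains no nonzero central ideal: every two-sided ideal of
`eRe` contained in its center is zero. -/
def NoNonzeroCentralIdeal (e : R) : Prop :=
  ∀ I : Set R, I ⊆ cornerCenter e → (0 : R) ∈ I →
    (∀ x ∈ I, ∀ y ∈ I, x + y ∈ I) → (∀ x ∈ I, -x ∈ I) →
    (∀ a ∈ corner e e, ∀ x ∈ I, a * x ∈ I ∧ x * a ∈ I) →
    ∀ x ∈ I, x = 0

/-- The corner algebra `eRe` is a domain. -/
def CornerDomain (e : R) : Prop :=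
  ∀ x ∈ corner e e, ∀ y ∈ corner e e, x * y = 0 → x = 0 ∨ y = 0

/-- The `(eRe, fRf)`-bimodule `eRf` is strongly faithful: either it is faithful as a right
`fRf`-module and `am = 0 → a = 0 ∨ m = 0`, or it is faithful as a left `eRe`-module and
`mb = 0 → m = 0 ∨ b = 0`. -/
def StronglyFaithful (e f : R) : Prop :=
  ((∀ b ∈ corner f f, (∀ m ∈ corner e f, m * b = 0) → b = 0) ∧
      ∀ a ∈ corner e e, ∀ m ∈ corner e f, a * m = 0 → a = 0 ∨ m = 0) ∨
    ((∀ a ∈ corner e e, (∀ m ∈ corner e f, a * m = 0) → a = 0) ∧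
      ∀ m ∈ corner e f, ∀ b ∈ corner f f, m * b = 0 → m = 0 ∨ b = 0)

end Peirce


-- ===================== auxiliary machinery =====================


section SumLemmas
variable {M : Type*} [AddCommMonoid M]

lemma ad_split_fst (k : ℕ) (F : ℕ × ℕ → M) :
    ∑ ij ∈ antidiagonal k, F ij
      = F (0, k) + ∑ ij ∈ antidiagonal k, if 1 ≤ ij.1 then F ij else 0 := by
  rw [← Finset.sum_filter_add_sum_filter_not (antidiagonal k) (fun ij => ij.1 = 0)]
  congr 1
  · have hfil : (antidiagonal k).filter (fun ij => ij.1 = 0) = {((0 : ℕ), k)} := by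
      ext ⟨i, j⟩
      simp only [Finset.mem_filter, Finset.HasAntidiagonal.mem_antidiagonal, Finset.mem_singleton,
        Prod.mk.injEq]
      omega
    rw [hfil, Finset.sum_singleton]
  · rw [Finset.sum_filter]
    refine Finset.sum_congr rfl fun x _ => ?_
    by_cases h : x.1 = 0
    · rw [if_neg (by simp [h]), if_neg (by omega)]
    · rw [if_pos (by simp [h]), if_pos (by omega)]

lemma ad_swap (k : ℕ) (F : ℕ → ℕ → M) :
    ∑ ij ∈ antidiagonal k, F ij.1 ij.2 = ∑ ij ∈ antidiagonal k, F ij.2 ij.1 := by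
  have := Nat.sum_antidiagonal_swap (n := k) (f := fun p => F p.1 p.2)
  simpa [Prod.swap] using this.symm

lemma ad_triple (k : ℕ) (G : ℕ → ℕ → ℕ → M) :
    ∑ ij ∈ antidiagonal k, ∑ uv ∈ antidiagonal ij.2, G ij.1 uv.1 uv.2
      = ∑ ij ∈ antidiagonal k, ∑ pq ∈ antidiagonal ij.1, G pq.1 pq.2 ij.2 := by
  rw [Finset.sum_sigma' (antidiagonal k) (fun ij => antidiagonal ij.2),
    Finset.sum_sigma' (antidiagonal k) (fun ij => antidiagonal ij.1)]
  refine Finset.sum_nbij' (fun x => ⟨(x.1.1 + x.2.1, x.2.2), (x.1.1, x.2.1)⟩)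
    (fun x => ⟨(x.2.1, x.2.2 + x.1.2), (x.2.2, x.1.2)⟩) ?_ ?_ ?_ ?_ ?_ <;>
    rintro ⟨⟨i, j⟩, ⟨u, v⟩⟩ h <;>
    simp only [Finset.mem_sigma, Finset.HasAntidiagonal.mem_antidiagonal, Sigma.mk.inj_iff,
      Prod.mk.injEq, heq_eq_eq, and_true, true_and] at h ⊢ <;>
    omega

lemma ad_quad (k : ℕ) (F : ℕ → ℕ → ℕ → ℕ → M) :
    ∑ ij ∈ antidiagonal k, ∑ pq ∈ antidiagonal ij.1, ∑ uv ∈ antidiagonal ij.2,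
        F pq.1 pq.2 uv.1 uv.2
      = ∑ st ∈ antidiagonal k, ∑ pu ∈ antidiagonal st.1, ∑ qv ∈ antidiagonal st.2,
        F pu.1 qv.1 pu.2 qv.2 := by
  rw [Finset.sum_sigma' (antidiagonal k) (fun ij => antidiagonal ij.1),
    Finset.sum_sigma' (antidiagonal k) (fun st => antidiagonal st.1)]
  rw [Finset.sum_sigma' ((antidiagonal k).sigma (fun ij => antidiagonal ij.1))
      (fun x => antidiagonal x.1.2),
    Finset.sum_sigma' ((antidiagonal k).sigma (fun st => antidiagonal st.1))
      (fun x => antidiagonal x.1.2)]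
  refine Finset.sum_nbij'
    (fun x => ⟨⟨(x.1.2.1 + x.2.1, x.1.2.2 + x.2.2), (x.1.2.1, x.2.1)⟩, (x.1.2.2, x.2.2)⟩)
    (fun x => ⟨⟨(x.1.2.1 + x.2.1, x.1.2.2 + x.2.2), (x.1.2.1, x.2.1)⟩, (x.1.2.2, x.2.2)⟩)
    ?_ ?_ ?_ ?_ ?_ <;>
    rintro ⟨⟨⟨i, j⟩, ⟨p, q⟩⟩, ⟨u, v⟩⟩ h <;>
    simp only [Finset.mem_sigma, Finset.HasAntidiagonal.mem_antidiagonal, Sigma.mk.inj_iff,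
      Prod.mk.injEq, heq_eq_eq, and_true, true_and] at h ⊢ <;>
    omega


lemma ad_split_snd (k : ℕ) (F : ℕ × ℕ → M) :
    ∑ ij ∈ antidiagonal k, F ij
      = F (k, 0) + ∑ ij ∈ antidiagonal k, if 1 ≤ ij.2 then F ij else 0 := by
  calc ∑ ij ∈ antidiagonal k, F ij
      = ∑ ij ∈ antidiagonal k, F (ij.2, ij.1) := ad_swap k (fun i j => F (i, j))
    _ = F (k, 0) + ∑ ij ∈ antidiagonal k, if 1 ≤ ij.1 then F (ij.2, ij.1) else 0 :=
        ad_split_fst k (fun ij => F (ij.2, ij.1))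
    _ = F (k, 0) + ∑ ij ∈ antidiagonal k, if 1 ≤ ij.2 then F ij else 0 := by
        rw [(ad_swap k fun i j => if 1 ≤ j then F (i, j) else 0).symm]

end SumLemmas

section TriAux
variable {𝕜 R : Type*} [CommRing 𝕜] [Ring R] [Algebra 𝕜 R]

def convComp (P Q : ℕ → R →ₗ[𝕜] R) : ℕ → R →ₗ[𝕜] R :=
  fun k => ∑ ij ∈ antidiagonal k, (P ij.1) ∘ₗ (Q ij.2)

lemma convComp_apply (P Q : ℕ → R →ₗ[𝕜] R) (k : ℕ) (x : R) :
    convComp P Q k x = ∑ ij ∈ antidiagonal k, P ij.1 (Q ij.2 x) := by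
  simp [convComp]

lemma convComp_isLHD {P Q : ℕ → R →ₗ[𝕜] R} (hP : IsLieHigherDerivation 𝕜 R P)
    (hQ : IsLieHigherDerivation 𝕜 R Q) : IsLieHigherDerivation 𝕜 R (convComp P Q) := by
  constructor
  · simp [convComp, hP.1, hQ.1]
  · intro k x y
    rw [convComp_apply]
    have lhs1 : ∑ ij ∈ antidiagonal k, P ij.1 (Q ij.2 (x * y - y * x))
        = ∑ ij ∈ antidiagonal k, ∑ pq ∈ antidiagonal ij.1, ∑ uv ∈ antidiagonal ij.2,
            (P pq.1 (Q uv.1 x) * P pq.2 (Q uv.2 y)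
              - P pq.2 (Q uv.2 y) * P pq.1 (Q uv.1 x)) := by
      refine Finset.sum_congr rfl fun ij _ => ?_
      rw [hQ.2 ij.2 x y, map_sum, Finset.sum_comm]
      exact Finset.sum_congr rfl fun uv _ => hP.2 ij.1 (Q uv.1 x) (Q uv.2 y)
    rw [lhs1]
    refine (ad_quad k (fun p q u v =>
      P p (Q u x) * P q (Q v y) - P q (Q v y) * P p (Q u x))).trans ?_
    refine Finset.sum_congr rfl fun st _ => ?_
    rw [convComp_apply, convComp_apply, Finset.sum_mul_sum, Finset.sum_mul_sum]
    rw [show (∑ qv ∈ antidiagonal st.2, ∑ pu ∈ antidiagonal st.1,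
        (P qv.1 ((Q qv.2) y)) * (P pu.1 ((Q pu.2) x)))
      = ∑ pu ∈ antidiagonal st.1, ∑ qv ∈ antidiagonal st.2,
        (P qv.1 ((Q qv.2) y)) * (P pu.1 ((Q pu.2) x)) from Finset.sum_comm,
      ← Finset.sum_sub_distrib]
    refine Finset.sum_congr rfl fun pu _ => ?_
    rw [← Finset.sum_sub_distrib]

def adL (𝕜 : Type*) {R : Type*} [CommRing 𝕜] [Ring R] [Algebra 𝕜 R] (w : R) : R →ₗ[𝕜] R :=
  LinearMap.mulLeft 𝕜 w - LinearMap.mulRight 𝕜 w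

lemma adL_apply (w x : R) : adL 𝕜 w x = w * x - x * w := by
  simp [adL]

def innSeq (𝕜 : Type*) {R : Type*} [CommRing 𝕜] [Ring R] [Algebra 𝕜 R] (w : ℕ → R) :
    ℕ → R →ₗ[𝕜] R :=
  fun k => if k = 0 then LinearMap.id else adL 𝕜 (w k)

lemma convComp_innSeq_apply (w : ℕ → R) (L : ℕ → R →ₗ[𝕜] R) (k : ℕ) (x : R) :
    convComp (innSeq 𝕜 w) L k x
      = L k x + ∑ ij ∈ antidiagonal k,
          (if 1 ≤ ij.1 then adL 𝕜 (w ij.1) (L ij.2 x) else 0) := by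
  rw [convComp_apply, ad_split_fst k (fun ij => innSeq 𝕜 w ij.1 (L ij.2 x))]
  have h0 : innSeq 𝕜 w 0 (L k x) = L k x := by simp [innSeq]
  rw [show innSeq 𝕜 w (0, k).1 (L (0, k).2 x) = L k x from h0]
  congr 1
  refine Finset.sum_congr rfl fun ij _ => ?_
  by_cases h : 1 ≤ ij.1
  · rw [if_pos h, if_pos h]
    simp only [innSeq, if_neg (show ¬ij.1 = 0 by omega)]
  · rw [if_neg h, if_neg h]

section WithE
variable {e : R} (he : e * e = e)
include he

lemma hffid : (1 - e) * (1 - e) = 1 - e := by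
  have key : (1 - e) * (1 - e) - (1 - e) = e * e - e := by noncomm_ring
  rw [he, sub_self] at key
  exact sub_eq_zero.mp key

lemma hef0 : e * (1 - e) = 0 := by
  rw [mul_sub, mul_one, he, sub_self]

lemma hfe0 : (1 - e) * e = 0 := by
  rw [sub_mul, one_mul, he, sub_self]

omit he in
lemma mem_corner_iff {u v x : R} (hu : u * u = u) (hv : v * v = v) :
    x ∈ corner u v ↔ u * x * v = x := by
  constructor
  · rintro ⟨r, rfl⟩
    have key : u * (u * r * v) * v - u * r * v
        = (u * u - u) * (r * (v * v)) + u * (r * (v * v - v)) := by noncomm_ring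
    rw [hu, hv] at key
    simp only [sub_self, zero_mul, mul_zero, add_zero, zero_add] at key
    exact sub_eq_zero.mp key
  · intro h
    exact ⟨x, h⟩

lemma mem_corner_ee {x : R} : x ∈ corner e e ↔ e * x * e = x :=
  mem_corner_iff he he

lemma mem_corner_ef {x : R} : x ∈ corner e (1 - e) ↔ e * x * (1 - e) = x :=
  mem_corner_iff he (hffid he)

lemma mem_corner_ff {x : R} : x ∈ corner (1 - e) (1 - e) ↔ (1 - e) * x * (1 - e) = x :=
  mem_corner_iff (hffid he) (hffid he)

section elts
variable {a x b : R}

lemma heA (ha : e * a * e = a) : e * a = a := by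
  conv_lhs => rw [← ha, ← mul_assoc, ← mul_assoc, he]
  exact ha
lemma hAe (ha : e * a * e = a) : a * e = a := by
  conv_lhs => rw [← ha, mul_assoc, he]
  exact ha
lemma hAf (ha : e * a * e = a) : a * (1 - e) = 0 := by
  rw [← hAe he ha, mul_assoc, hef0 he, mul_zero]
lemma hfA (ha : e * a * e = a) : (1 - e) * a = 0 := by
  rw [← heA he ha, ← mul_assoc, hfe0 he, zero_mul]

lemma heM (hx : e * x * (1 - e) = x) : e * x = x := by
  conv_lhs => rw [← hx, ← mul_assoc, ← mul_assoc, he]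
  exact hx
lemma hMf (hx : e * x * (1 - e) = x) : x * (1 - e) = x := by
  conv_lhs => rw [← hx, mul_assoc, hffid he]
  exact hx
lemma hMe (hx : e * x * (1 - e) = x) : x * e = 0 := by
  rw [← hMf he hx, mul_assoc, hfe0 he, mul_zero]
lemma hfM (hx : e * x * (1 - e) = x) : (1 - e) * x = 0 := by
  rw [← heM he hx, ← mul_assoc, hfe0 he, zero_mul]

lemma hfB (hb : (1 - e) * b * (1 - e) = b) : (1 - e) * b = b := by
  conv_lhs => rw [← hb, ← mul_assoc, ← mul_assoc, hffid he]
  exact hb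
lemma hBf (hb : (1 - e) * b * (1 - e) = b) : b * (1 - e) = b := by
  conv_lhs => rw [← hb, mul_assoc, hffid he]
  exact hb
lemma heB (hb : (1 - e) * b * (1 - e) = b) : e * b = 0 := by
  rw [← hfB he hb, ← mul_assoc, hef0 he, zero_mul]
lemma hBe (hb : (1 - e) * b * (1 - e) = b) : b * e = 0 := by
  rw [← hBf he hb, mul_assoc, hfe0 he, mul_zero]

-- vanishing products between corners
lemma mulMM {y : R} (hx : e * x * (1 - e) = x) (hy : e * y * (1 - e) = y) : x * y = 0 := by
  rw [← heM he hy, ← mul_assoc, hMe he hx, zero_mul]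
lemma mulMA (hx : e * x * (1 - e) = x) (ha : e * a * e = a) : x * a = 0 := by
  rw [← heA he ha, ← mul_assoc, hMe he hx, zero_mul]
lemma mulBM (hb : (1 - e) * b * (1 - e) = b) (hx : e * x * (1 - e) = x) : b * x = 0 := by
  rw [← heM he hx, ← mul_assoc, hBe he hb, zero_mul]
lemma mulAB (ha : e * a * e = a) (hb : (1 - e) * b * (1 - e) = b) : a * b = 0 := by
  rw [← hfB he hb, ← mul_assoc, hAf he ha, zero_mul]
lemma mulBA (hb : (1 - e) * b * (1 - e) = b) (ha : e * a * e = a) : b * a = 0 := by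
  rw [← heA he ha, ← mul_assoc, hBe he hb, zero_mul]

-- memberships of products
lemma memAM (ha : e * a * e = a) (hx : e * x * (1 - e) = x) : e * (a * x) * (1 - e) = a * x := by
  have h1 : e * (a * x) = a * x := by rw [← mul_assoc, heA he ha]
  rw [h1, mul_assoc, hMf he hx]
lemma memMB (hx : e * x * (1 - e) = x) (hb : (1 - e) * b * (1 - e) = b) :
    e * (x * b) * (1 - e) = x * b := by
  have h1 : e * (x * b) = x * b := by rw [← mul_assoc, heM he hx]
  rw [h1, mul_assoc, hBf he hb]
lemma memAA {a' : R} (ha : e * a * e = a) (ha' : e * a' * e = a') :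
    e * (a * a') * e = a * a' := by
  have h1 : e * (a * a') = a * a' := by rw [← mul_assoc, heA he ha]
  rw [h1, mul_assoc, hAe he ha']
lemma memBB {b' : R} (hb : (1 - e) * b * (1 - e) = b) (hb' : (1 - e) * b' * (1 - e) = b') :
    (1 - e) * (b * b') * (1 - e) = b * b' := by
  have h1 : (1 - e) * (b * b') = b * b' := by rw [← mul_assoc, hfB he hb]
  rw [h1, mul_assoc, hBf he hb']

end elts

lemma sandA (u : R) : e * (e * u * e) * e = e * u * e := by
  rw [← mul_assoc, ← mul_assoc, he, mul_assoc, mul_assoc, he, ← mul_assoc]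
lemma sandM (u : R) : e * (e * u * (1 - e)) * (1 - e) = e * u * (1 - e) := by
  rw [← mul_assoc, ← mul_assoc, he, mul_assoc, mul_assoc, hffid he, ← mul_assoc]
lemma sandB (u : R) : (1 - e) * ((1 - e) * u * (1 - e)) * (1 - e) = (1 - e) * u * (1 - e) := by
  rw [← mul_assoc, ← mul_assoc, hffid he, mul_assoc, mul_assoc, hffid he, ← mul_assoc]

variable (htri : ∀ r : R, (1 - e) * r * e = 0)
include htri

lemma hue (u : R) : u * e = e * u * e := by
  have key : u * e - e * u * e = (1 - e) * u * e := by noncomm_ring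
  rw [htri u] at key
  exact sub_eq_zero.mp key

lemma huf (u : R) : (1 - e) * u = (1 - e) * u * (1 - e) := by
  have key : (1 - e) * u - (1 - e) * u * (1 - e) = (1 - e) * u * e := by noncomm_ring
  rw [htri u] at key
  exact sub_eq_zero.mp key

lemma peirce_decomp (x : R) :
    e * x * e + e * x * (1 - e) + (1 - e) * x * (1 - e) = x := by
  have key : e * x * e + e * x * (1 - e) + (1 - e) * x * (1 - e) - x
      = -((1 - e) * x * e) := by noncomm_ring
  rw [htri x, neg_zero] at key
  exact sub_eq_zero.mp key

lemma piA_mul (u v : R) : e * (u * v) * e = (e * u * e) * (e * v * e) := by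
  have key : e * (u * v) * e - (e * u * e) * (e * v * e)
      = e * u * ((1 - e) * v * e) + e * u * ((e - e * e) * (v * e)) := by noncomm_ring
  rw [htri v, he] at key
  simp only [sub_self, zero_mul, mul_zero, add_zero, zero_add] at key
  exact sub_eq_zero.mp key

lemma piB_mul (u v : R) :
    (1 - e) * (u * v) * (1 - e) = ((1 - e) * u * (1 - e)) * ((1 - e) * v * (1 - e)) := by
  have key : (1 - e) * (u * v) * (1 - e)
        - ((1 - e) * u * (1 - e)) * ((1 - e) * v * (1 - e))
      = ((1 - e) * u * e) * (v * (1 - e))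
        + ((1 - e) * u) * ((e - e * e) * (v * (1 - e))) := by noncomm_ring
  rw [htri u, he] at key
  simp only [sub_self, zero_mul, mul_zero, add_zero, zero_add] at key
  exact sub_eq_zero.mp key

omit htri in
lemma piM_mul (u v : R) :
    e * (u * v) * (1 - e)
      = (e * u * e) * (e * v * (1 - e)) + (e * u * (1 - e)) * ((1 - e) * v * (1 - e)) := by
  have key : e * (u * v) * (1 - e)
      - ((e * u * e) * (e * v * (1 - e)) + (e * u * (1 - e)) * ((1 - e) * v * (1 - e)))
      = e * u * ((e - e * e) * (v * (1 - e))) + e * u * ((e - e * e) * (v * (1 - e))) := by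
    noncomm_ring
  rw [he] at key
  simp only [sub_self, zero_mul, mul_zero, add_zero, zero_add] at key
  exact sub_eq_zero.mp key

lemma M_mul_left {m : R} (hm : e * m * (1 - e) = m) (u : R) :
    m * u = m * ((1 - e) * u * (1 - e)) := by
  conv_lhs => rw [← hMf he hm, mul_assoc, huf he htri u]

lemma M_mul_right {m : R} (hm : e * m * (1 - e) = m) (u : R) :
    u * m = (e * u * e) * m := by
  conv_lhs => rw [← heM he hm, ← mul_assoc, hue he htri u]

lemma adL_mem {w : R} (hw : e * w * (1 - e) = w) (u : R) :
    e * (adL 𝕜 w u) * (1 - e) = adL 𝕜 w u := by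
  rw [adL_apply, M_mul_left he htri hw u, M_mul_right he htri hw u]
  have hsub : ∀ X Y : R, e * (X - Y) * (1 - e) = e * X * (1 - e) - e * Y * (1 - e) := by
    intro X Y; noncomm_ring
  rw [hsub, memMB he hw (sandB he u), memAM he (sandA he u) hw]

omit htri in
lemma adL_M_zero {w m : R} (hw : e * w * (1 - e) = w) (hm : e * m * (1 - e) = m) :
    adL 𝕜 w m = 0 := by
  rw [adL_apply, mulMM he hw hm, mulMM he hm hw, sub_zero]

lemma innSeq_isLHD {w : ℕ → R} (hw : ∀ j, 1 ≤ j → e * (w j) * (1 - e) = w j) :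
    IsLieHigherDerivation 𝕜 R (innSeq 𝕜 w) := by
  constructor
  · simp [innSeq]
  · intro k x y
    rcases Nat.eq_zero_or_pos k with hk | hk
    · subst hk; simp [innSeq]
    · have hk0 : k ≠ 0 := by omega
      set F := fun ij : ℕ × ℕ => innSeq 𝕜 w ij.1 x * innSeq 𝕜 w ij.2 y
          - innSeq 𝕜 w ij.2 y * innSeq 𝕜 w ij.1 x with hF
      rw [ad_split_fst k F, ad_split_snd k (fun ij => if 1 ≤ ij.1 then F ij else 0)]
      have hmid : (∑ ij ∈ antidiagonal k,
          if 1 ≤ ij.2 then (if 1 ≤ ij.1 then F ij else 0) else 0) = 0 := by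
        refine Finset.sum_eq_zero fun ij hij => ?_
        by_cases h2 : 1 ≤ ij.2
        · rw [if_pos h2]
          by_cases h1 : 1 ≤ ij.1
          · rw [if_pos h1, hF]
            have e1 : innSeq 𝕜 w ij.1 = adL 𝕜 (w ij.1) := if_neg (by omega)
            have e2 : innSeq 𝕜 w ij.2 = adL 𝕜 (w ij.2) := if_neg (by omega)
            simp only [e1, e2]
            rw [mulMM he (adL_mem he htri (hw ij.1 h1) x) (adL_mem he htri (hw ij.2 h2) y),
              mulMM he (adL_mem he htri (hw ij.2 h2) y) (adL_mem he htri (hw ij.1 h1) x),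
              sub_zero]
          · rw [if_neg h1]
        · rw [if_neg h2]
      rw [hmid, add_zero, if_pos (show 1 ≤ (k, 0).1 from hk)]
      have e0 : innSeq 𝕜 w 0 = (LinearMap.id : R →ₗ[𝕜] R) := if_pos rfl
      have ek : innSeq 𝕜 w k = adL 𝕜 (w k) := if_neg hk0
      simp only [hF, e0, ek, LinearMap.id_coe, id_eq, adL_apply]
      noncomm_ring

lemma inn_collapse {w : ℕ → R} (hw : ∀ j, 1 ≤ j → e * (w j) * (1 - e) = w j)
    {s : ℕ} (hs : 1 ≤ s) (z : R) :
    ∑ iu ∈ antidiagonal s, innSeq 𝕜 w iu.1 (innSeq 𝕜 (fun j => -(w j)) iu.2 z) = 0 := by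
  have hw' : ∀ j, 1 ≤ j → e * (-(w j)) * (1 - e) = -(w j) := by
    intro j hj; rw [mul_neg, neg_mul, hw j hj]
  set G := fun iu : ℕ × ℕ => innSeq 𝕜 w iu.1 (innSeq 𝕜 (fun j => -(w j)) iu.2 z) with hG
  rw [ad_split_fst s G, ad_split_snd s (fun ij => if 1 ≤ ij.1 then G ij else 0)]
  have hmid : (∑ ij ∈ antidiagonal s,
      if 1 ≤ ij.2 then (if 1 ≤ ij.1 then G ij else 0) else 0) = 0 := by
    refine Finset.sum_eq_zero fun ij hij => ?_
    by_cases h2 : 1 ≤ ij.2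
    · rw [if_pos h2]
      by_cases h1 : 1 ≤ ij.1
      · rw [if_pos h1, hG]
        simp only [innSeq, if_neg (show ij.1 ≠ 0 by omega), if_neg (show ij.2 ≠ 0 by omega)]
        exact adL_M_zero he (hw ij.1 h1) (adL_mem he htri (hw' ij.2 h2) z)
      · rw [if_neg h1]
    · rw [if_neg h2]
  rw [hmid, add_zero, if_pos (show 1 ≤ (s, 0).1 from hs)]
  have hG1 : G (0, s) = -(adL 𝕜 (w s) z) := by
    simp only [hG, innSeq, if_pos rfl, if_neg (show s ≠ 0 by omega), LinearMap.id_coe, id_eq]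
    have : adL 𝕜 (-(w s)) = -(adL 𝕜 (w s)) := by
      ext u; simp [adL_apply, neg_mul, mul_neg]; noncomm_ring
    rw [this]; rfl
  have hG2 : G (s, 0) = adL 𝕜 (w s) z := by
    simp only [hG, innSeq, if_neg (show ¬s = 0 by omega), if_pos rfl, LinearMap.id_coe, id_eq]
    rfl
  rw [hG1, hG2, neg_add_cancel]

lemma inn_recon {w : ℕ → R} (hw : ∀ j, 1 ≤ j → e * (w j) * (1 - e) = w j)
    (L : ℕ → R →ₗ[𝕜] R) (k : ℕ) (x : R) :
    convComp (innSeq 𝕜 w) (convComp (innSeq 𝕜 (fun j => -(w j))) L) k x = L k x := by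
  rw [convComp_apply]
  have step1 : ∑ ij ∈ antidiagonal k,
      innSeq 𝕜 w ij.1 (convComp (innSeq 𝕜 (fun j => -(w j))) L ij.2 x)
      = ∑ ij ∈ antidiagonal k, ∑ uv ∈ antidiagonal ij.2,
          innSeq 𝕜 w ij.1 (innSeq 𝕜 (fun j => -(w j)) uv.1 (L uv.2 x)) := by
    refine Finset.sum_congr rfl fun ij _ => ?_
    rw [convComp_apply, map_sum]
  rw [step1, ad_triple k (fun i u v => innSeq 𝕜 w i (innSeq 𝕜 (fun j => -(w j)) u (L v x)))]
  have step2 : ∀ ij : ℕ × ℕ, ij ∈ antidiagonal k →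
      (∑ pq ∈ antidiagonal ij.1,
        innSeq 𝕜 w pq.1 (innSeq 𝕜 (fun j => -(w j)) pq.2 (L ij.2 x)))
      = if ij.1 = 0 then L ij.2 x else 0 := by
    intro ij _
    rcases Nat.eq_zero_or_pos ij.1 with h | h
    · rw [h, if_pos rfl]
      simp [innSeq]
    · rw [if_neg (by omega), inn_collapse he htri hw h (L ij.2 x)]
  rw [Finset.sum_congr rfl step2, ad_split_fst k (fun ij => if ij.1 = 0 then L ij.2 x else 0)]
  have hz : (∑ ij ∈ antidiagonal k,
      if 1 ≤ ij.1 then (if ij.1 = 0 then L ij.2 x else 0) else 0) = 0 := by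
    refine Finset.sum_eq_zero fun ij _ => ?_
    by_cases h : 1 ≤ ij.1
    · rw [if_pos h, if_neg (by omega)]
    · rw [if_neg h]
  rw [hz, add_zero, if_pos rfl]

end WithE
end TriAux

section MoreSand
variable {R : Type*} [Ring R]

lemma sand_sub (p q X Y : R) : p * (X - Y) * q = p * X * q - p * Y * q := by noncomm_ring
lemma sand_add (p q X Y : R) : p * (X + Y) * q = p * X * q + p * Y * q := by noncomm_ring
lemma sand_sum {ι : Type*} (s : Finset ι) (g : ι → R) (p q : R) :
    p * (∑ i ∈ s, g i) * q = ∑ i ∈ s, p * g i * q := by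
  rw [Finset.mul_sum, Finset.sum_mul]

end MoreSand

section WithE2
variable {𝕜 R : Type*} [CommRing 𝕜] [Ring R] [Algebra 𝕜 R]
variable {e : R} (he : e * e = e) (htri : ∀ r : R, (1 - e) * r * e = 0)
include he htri

lemma piA_comm (u v : R) :
    e * (u * v - v * u) * e
      = (e * u * e) * (e * v * e) - (e * v * e) * (e * u * e) := by
  rw [sand_sub, piA_mul he htri u v, piA_mul he htri v u]

lemma piB_comm (u v : R) :
    (1 - e) * (u * v - v * u) * (1 - e)
      = ((1 - e) * u * (1 - e)) * ((1 - e) * v * (1 - e))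
        - ((1 - e) * v * (1 - e)) * ((1 - e) * u * (1 - e)) := by
  rw [sand_sub, piB_mul he htri u v, piB_mul he htri v u]

omit htri in
lemma piM_comm (u v : R) :
    e * (u * v - v * u) * (1 - e)
      = ((e * u * e) * (e * v * (1 - e)) + (e * u * (1 - e)) * ((1 - e) * v * (1 - e)))
        - ((e * v * e) * (e * u * (1 - e)) + (e * v * (1 - e)) * ((1 - e) * u * (1 - e))) := by
  rw [sand_sub, piM_mul he u v, piM_mul he v u]

end WithE2

def sandLR (𝕜 : Type*) {R : Type*} [CommRing 𝕜] [Ring R] [Algebra 𝕜 R] (u v : R) :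
    R →ₗ[𝕜] R := (LinearMap.mulRight 𝕜 v).comp (LinearMap.mulLeft 𝕜 u)

lemma sandLR_apply {𝕜 R : Type*} [CommRing 𝕜] [Ring R] [Algebra 𝕜 R] (u v x : R) :
    sandLR 𝕜 u v x = u * x * v := rfl

def wseq {𝕜 R : Type*} [CommRing 𝕜] [Ring R] [Algebra 𝕜 R] (L : ℕ → R →ₗ[𝕜] R) (e : R) :
    ℕ → R
  | k =>
    (∑ i ∈ (Finset.range k).attach,
        (wseq L e i.1 * ((1 - e) * (L (k - i.1) e) * (1 - e))
          - (e * (L (k - i.1) e) * e) * wseq L e i.1))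
      - e * (L k e) * (1 - e)
  termination_by k => k
  decreasing_by exact Finset.mem_range.mp i.2

lemma wseq_eq {𝕜 R : Type*} [CommRing 𝕜] [Ring R] [Algebra 𝕜 R] (L : ℕ → R →ₗ[𝕜] R)
    (e : R) (k : ℕ) :
    wseq L e k
      = (∑ i ∈ Finset.range k,
          (wseq L e i * ((1 - e) * (L (k - i) e) * (1 - e))
            - (e * (L (k - i) e) * e) * wseq L e i))
        - e * (L k e) * (1 - e) := by
  conv_lhs => rw [wseq]
  rw [Finset.sum_attach (Finset.range k) (fun i => wseq L e i * ((1 - e) * (L (k - i) e) * (1 - e))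
      - (e * (L (k - i) e) * e) * wseq L e i)]


section Forward
variable {𝕜 R : Type*} [CommRing 𝕜] [Ring R] [Algebra 𝕜 R]

lemma wseq_zero (L : ℕ → R →ₗ[𝕜] R) {e : R} (he : e * e = e)
    (hL0 : L 0 = LinearMap.id) : wseq L e 0 = 0 := by
  rw [wseq_eq, Finset.range_zero, Finset.sum_empty, hL0]
  simp only [LinearMap.id_coe, id_eq]
  rw [he, hef0 he, sub_zero]

lemma wseq_mem (L : ℕ → R →ₗ[𝕜] R) {e : R} (he : e * e = e) (k : ℕ) :
    e * wseq L e k * (1 - e) = wseq L e k := by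
  induction k using Nat.strong_induction_on with
  | _ k ih =>
    rw [wseq_eq, sand_sub, sandM he]
    congr 1
    rw [sand_sum]
    refine Finset.sum_congr rfl fun i hi => ?_
    have hiW := ih i (Finset.mem_range.mp hi)
    rw [sand_sub, memMB he hiW (sandB he _), memAM he (sandA he _) hiW]

lemma wseq_normal (L : ℕ → R →ₗ[𝕜] R) {e : R} (he : e * e = e)
    (htri : ∀ r : R, (1 - e) * r * e = 0) (hL0 : L 0 = LinearMap.id)
    (k : ℕ) (hk : 1 ≤ k) :
    e * ((convComp (innSeq 𝕜 (fun j => -(wseq L e j))) L) k e) * (1 - e) = 0 := by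
  rw [convComp_innSeq_apply, sand_add, sand_sum]
  have hterm : ∀ ij : ℕ × ℕ, ij ∈ antidiagonal k →
      e * (if 1 ≤ ij.1 then adL 𝕜 (-(wseq L e ij.1)) (L ij.2 e) else 0) * (1 - e)
        = (if 1 ≤ ij.1 then ((e * (L ij.2 e) * e) * wseq L e ij.1
            - wseq L e ij.1 * ((1 - e) * (L ij.2 e) * (1 - e))) else 0) := by
    intro ij _
    by_cases h1 : 1 ≤ ij.1
    · rw [if_pos h1, if_pos h1]
      have hmem : e * (-(wseq L e ij.1)) * (1 - e) = -(wseq L e ij.1) := by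
        rw [mul_neg, neg_mul, wseq_mem L he ij.1]
      rw [adL_mem he htri hmem (L ij.2 e)]
      have hv : adL 𝕜 (-(wseq L e ij.1)) (L ij.2 e)
          = (L ij.2 e) * wseq L e ij.1 - wseq L e ij.1 * (L ij.2 e) := by
        rw [adL_apply]; noncomm_ring
      rw [hv, M_mul_right he htri (wseq_mem L he ij.1) (L ij.2 e),
        M_mul_left he htri (wseq_mem L he ij.1) (L ij.2 e)]
    · rw [if_neg h1, if_neg h1, mul_zero, zero_mul]
  rw [Finset.sum_congr rfl hterm, Nat.sum_antidiagonal_eq_sum_range_succ_mk,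
    Finset.sum_range_succ]
  have hlast : (if 1 ≤ k then (e * (L (k - k) e) * e) * wseq L e k
      - wseq L e k * ((1 - e) * (L (k - k) e) * (1 - e)) else 0) = wseq L e k := by
    rw [if_pos hk, Nat.sub_self, hL0]
    simp only [LinearMap.id_coe, id_eq]
    rw [hfe0 he, zero_mul, mul_zero, sub_zero, he, he, heM he (wseq_mem L he k)]
  have hdrop : ∀ i ∈ Finset.range k,
      (if 1 ≤ i then ((e * (L (k - i) e) * e) * wseq L e i
        - wseq L e i * ((1 - e) * (L (k - i) e) * (1 - e))) else 0)
      = -(wseq L e i * ((1 - e) * (L (k - i) e) * (1 - e))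
          - (e * (L (k - i) e) * e) * wseq L e i) := by
    intro i _
    by_cases h1 : 1 ≤ i
    · rw [if_pos h1, neg_sub]
    · have h0 : i = 0 := by omega
      subst h0
      rw [if_neg h1, wseq_zero L he hL0, mul_zero, zero_mul, sub_zero, neg_zero]
  have hmain : (∑ i ∈ Finset.range k,
      if 1 ≤ i then ((e * (L (k - i) e) * e) * wseq L e i
        - wseq L e i * ((1 - e) * (L (k - i) e) * (1 - e))) else 0)
      = -(wseq L e k + e * (L k e) * (1 - e)) := by
    rw [Finset.sum_congr rfl hdrop, Finset.sum_neg_distrib]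
    have h3 : wseq L e k + e * (L k e) * (1 - e)
        = ∑ i ∈ Finset.range k, (wseq L e i * ((1 - e) * (L (k - i) e) * (1 - e))
            - (e * (L (k - i) e) * e) * wseq L e i) := by
      rw [wseq_eq L e k, sub_add_cancel]
    rw [h3]
  rw [hlast, hmain]
  abel

lemma forward_aux (e : R) (he : e * e = e)
    (htri : ∀ r : R, (1 - e) * r * e = 0)
    (L : ℕ → R →ₗ[𝕜] R) (hL0 : L 0 = LinearMap.id)
    (hL : IsLieHigherDerivation 𝕜 R L) :
    ∃ (m : ℕ → R) (p1 p2 q1 q2 f3 : ℕ → R →ₗ[𝕜] R),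
        -- the elements `m j ∈ M` for `j ≥ 1`
        (∀ j, 1 ≤ j → m j ∈ corner e (1 - e)) ∧
        -- conventions at index 0
        (∀ a ∈ corner e e, p1 0 a = a) ∧
        (∀ b ∈ corner (1 - e) (1 - e), q2 0 b = b) ∧
        (∀ b ∈ corner (1 - e) (1 - e), p2 0 b = 0) ∧
        (∀ a ∈ corner e e, q1 0 a = 0) ∧
        (∀ x ∈ corner e (1 - e), f3 0 x = x) ∧
        -- ranges of the entry maps
        (∀ k, 1 ≤ k →
          (∀ a ∈ corner e e, p1 k a ∈ corner e e) ∧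
          (∀ b ∈ corner (1 - e) (1 - e), p2 k b ∈ cornerCenter e) ∧
          (∀ a ∈ corner e e, q1 k a ∈ cornerCenter (1 - e)) ∧
          (∀ b ∈ corner (1 - e) (1 - e), q2 k b ∈ corner (1 - e) (1 - e)) ∧
          (∀ x ∈ corner e (1 - e), f3 k x ∈ corner e (1 - e))) ∧
        -- (0): the presentation of `L k`
        (∀ k, 1 ≤ k → ∀ a ∈ corner e e, ∀ x ∈ corner e (1 - e),
          ∀ b ∈ corner (1 - e) (1 - e),
          L k (a + x + b) =
            p1 k a + p2 k b +
              (∑ ij ∈ (Finset.HasAntidiagonal.antidiagonal k).filter (fun ij => 1 ≤ ij.2),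
                ((p1 ij.1 a + p2 ij.1 b) * m ij.2 -
                  m ij.2 * (q1 ij.1 a + q2 ij.1 b))) +
              f3 k x + q1 k a + q2 k b) ∧
        -- (1): `p1` and `q2` are Lie higher derivations on `A` resp. `B`
        (∀ (k : ℕ), ∀ a ∈ corner e e, ∀ a' ∈ corner e e,
          p1 k (a * a' - a' * a) =
            ∑ ij ∈ Finset.HasAntidiagonal.antidiagonal k,
              (p1 ij.1 a * p1 ij.2 a' - p1 ij.2 a' * p1 ij.1 a)) ∧
        (∀ (k : ℕ), ∀ b ∈ corner (1 - e) (1 - e), ∀ b' ∈ corner (1 - e) (1 - e),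
          q2 k (b * b' - b' * b) =
            ∑ ij ∈ Finset.HasAntidiagonal.antidiagonal k,
              (q2 ij.1 b * q2 ij.2 b' - q2 ij.2 b' * q2 ij.1 b)) ∧
        -- (2): `q1` and `p2` vanish on commutators
        (∀ k, 1 ≤ k → ∀ a ∈ corner e e, ∀ a' ∈ corner e e,
          q1 k (a * a' - a' * a) = 0) ∧
        (∀ k, 1 ≤ k → ∀ b ∈ corner (1 - e) (1 - e), ∀ b' ∈ corner (1 - e) (1 - e),
          p2 k (b * b' - b' * b) = 0) ∧
        -- (3): the module equations for `f3`
        (∀ k, 1 ≤ k → ∀ a ∈ corner e e, ∀ x ∈ corner e (1 - e),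
          f3 k (a * x) =
            ∑ ij ∈ Finset.HasAntidiagonal.antidiagonal k,
              (p1 ij.1 a * f3 ij.2 x - f3 ij.2 x * q1 ij.1 a)) ∧
        (∀ k, 1 ≤ k → ∀ x ∈ corner e (1 - e), ∀ b ∈ corner (1 - e) (1 - e),
          f3 k (x * b) =
            ∑ ij ∈ Finset.HasAntidiagonal.antidiagonal k,
              (f3 ij.2 x * q2 ij.1 b - p2 ij.1 b * f3 ij.2 x)) := by
  classical
  have hwm : ∀ j, 1 ≤ j → e * (-(wseq L e j)) * (1 - e) = -(wseq L e j) := fun j _ => by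
    rw [mul_neg, neg_mul, wseq_mem L he j]
  set L' : ℕ → R →ₗ[𝕜] R := convComp (innSeq 𝕜 (fun j => -(wseq L e j))) L with hL'def
  have hL'LHD : IsLieHigherDerivation 𝕜 R L' :=
    convComp_isLHD (innSeq_isLHD he htri hwm) hL
  have hL'0 : ∀ z : R, L' 0 z = z := by
    intro z
    rw [hL'def, convComp_innSeq_apply, hL0]
    simp
  have hrec : ∀ k (z : R), L k z = L' k z + ∑ ij ∈ antidiagonal k,
      (if 1 ≤ ij.1 then adL 𝕜 (wseq L e ij.1) (L' ij.2 z) else 0) := by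
    intro k z
    conv_lhs => rw [← inn_recon he htri (fun j _ => wseq_mem L he j) L k z]
    rw [convComp_innSeq_apply]
  have hE : ∀ i, e * (L' i e) * (1 - e) = 0 := by
    intro i
    rcases Nat.eq_zero_or_pos i with h | h
    · subst h; rw [hL'0 e, he, hef0 he]
    · exact wseq_normal L he htri hL0 i h
  have hQ : ∀ k,
      (∀ x, e * x * (1 - e) = x → e * (L' k x) * e = 0) ∧
      (∀ x, e * x * (1 - e) = x → (1 - e) * (L' k x) * (1 - e) = 0) ∧
      (∀ a, e * a * e = a → e * (L' k a) * (1 - e) = 0) ∧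
      (∀ b, (1 - e) * b * (1 - e) = b → e * (L' k b) * (1 - e) = 0) ∧
      (∀ b, (1 - e) * b * (1 - e) = b → ∀ a, e * a * e = a →
        (e * (L' k b) * e) * a = a * (e * (L' k b) * e)) ∧
      (∀ a, e * a * e = a → ∀ b, (1 - e) * b * (1 - e) = b →
        ((1 - e) * (L' k a) * (1 - e)) * b = b * ((1 - e) * (L' k a) * (1 - e))) := by
    intro k
    induction k using Nat.strong_induction_on with
    | _ k ih =>
    refine ⟨?_, ?_, ?_, ?_, ?_, ?_⟩
    · -- e (L' k x) e = 0 for x ∈ M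
      intro x hx
      have hbr := hL'LHD.2 k e x
      rw [show e * x - x * e = x by rw [heM he hx, hMe he hx, sub_zero]] at hbr
      rw [hbr, sand_sum]
      refine Finset.sum_eq_zero fun ij hij => ?_
      rw [piA_comm he htri]
      rcases Nat.lt_or_ge ij.2 k with hlt | hge
      · rw [(ih ij.2 hlt).1 x hx, mul_zero, zero_mul, sub_zero]
      · have hmem := Finset.HasAntidiagonal.mem_antidiagonal.mp hij
        have h2 : ij.2 = k := by omega
        have h1 : ij.1 = 0 := by omega
        rw [h1, h2, hL'0 e, he, he, heA he (sandA he (L' k x)),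
          hAe he (sandA he (L' k x)), sub_self]
    · -- (1-e) (L' k x) (1-e) = 0 for x ∈ M
      intro x hx
      have hbr := hL'LHD.2 k e x
      rw [show e * x - x * e = x by rw [heM he hx, hMe he hx, sub_zero]] at hbr
      rw [hbr, sand_sum]
      refine Finset.sum_eq_zero fun ij hij => ?_
      rw [piB_comm he htri]
      rcases Nat.lt_or_ge ij.2 k with hlt | hge
      · rw [(ih ij.2 hlt).2.1 x hx, mul_zero, zero_mul, sub_zero]
      · have hmem := Finset.HasAntidiagonal.mem_antidiagonal.mp hij
        have h2 : ij.2 = k := by omega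
        have h1 : ij.1 = 0 := by omega
        rw [h1, h2, hL'0 e, hfe0 he, zero_mul, zero_mul, mul_zero, sub_zero]
    · -- e (L' k a) (1-e) = 0 for a ∈ A
      intro a ha
      have hbr := hL'LHD.2 k e a
      rw [show e * a - a * e = (0 : R) by rw [heA he ha, hAe he ha, sub_self],
        map_zero] at hbr
      have key : e * (∑ ij ∈ antidiagonal k,
          (L' ij.1 e * L' ij.2 a - L' ij.2 a * L' ij.1 e)) * (1 - e) = 0 := by
        rw [← hbr, mul_zero, zero_mul]
      rw [sand_sum, ad_split_fst k
        (fun ij => e * (L' ij.1 e * L' ij.2 a - L' ij.2 a * L' ij.1 e) * (1 - e))] at key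
      have h0k : e * (L' 0 e * L' k a - L' k a * L' 0 e) * (1 - e)
          = e * (L' k a) * (1 - e) := by
        rw [piM_comm he (L' 0 e) (L' k a), hL'0 e]
        have h1 : e * e * e = e := by rw [he, he]
        have h2 : e * e * (1 - e) = (0 : R) := by rw [he, hef0 he]
        have h3 : (1 - e) * e * (1 - e) = (0 : R) := by rw [hfe0 he, zero_mul]
        rw [h1, h2, h3]
        simp only [zero_mul, mul_zero, add_zero, sub_zero]
        exact heM he (sandM he (L' k a))
      have hrest : (∑ ij ∈ antidiagonal k, if 1 ≤ ij.1 then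
          e * (L' ij.1 e * L' ij.2 a - L' ij.2 a * L' ij.1 e) * (1 - e) else 0) = 0 := by
        refine Finset.sum_eq_zero fun ij hij => ?_
        by_cases h1 : 1 ≤ ij.1
        · have hmem := Finset.HasAntidiagonal.mem_antidiagonal.mp hij
          have hlt : ij.2 < k := by omega
          rw [if_pos h1, piM_comm he (L' ij.1 e) (L' ij.2 a), hE ij.1,
            (ih ij.2 hlt).2.2.1 a ha]
          simp only [zero_mul, mul_zero, add_zero, sub_zero, zero_add, sub_self]
        · rw [if_neg h1]
      rw [h0k, hrest, add_zero] at key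
      exact key
    · -- e (L' k b) (1-e) = 0 for b ∈ B
      intro b hb
      have hbr := hL'LHD.2 k e b
      rw [show e * b - b * e = (0 : R) by rw [heB he hb, hBe he hb, sub_self],
        map_zero] at hbr
      have key : e * (∑ ij ∈ antidiagonal k,
          (L' ij.1 e * L' ij.2 b - L' ij.2 b * L' ij.1 e)) * (1 - e) = 0 := by
        rw [← hbr, mul_zero, zero_mul]
      rw [sand_sum, ad_split_fst k
        (fun ij => e * (L' ij.1 e * L' ij.2 b - L' ij.2 b * L' ij.1 e) * (1 - e))] at key
      have h0k : e * (L' 0 e * L' k b - L' k b * L' 0 e) * (1 - e)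
          = e * (L' k b) * (1 - e) := by
        rw [piM_comm he (L' 0 e) (L' k b), hL'0 e]
        have h1 : e * e * e = e := by rw [he, he]
        have h2 : e * e * (1 - e) = (0 : R) := by rw [he, hef0 he]
        have h3 : (1 - e) * e * (1 - e) = (0 : R) := by rw [hfe0 he, zero_mul]
        rw [h1, h2, h3]
        simp only [zero_mul, mul_zero, add_zero, sub_zero]
        exact heM he (sandM he (L' k b))
      have hrest : (∑ ij ∈ antidiagonal k, if 1 ≤ ij.1 then
          e * (L' ij.1 e * L' ij.2 b - L' ij.2 b * L' ij.1 e) * (1 - e) else 0) = 0 := by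
        refine Finset.sum_eq_zero fun ij hij => ?_
        by_cases h1 : 1 ≤ ij.1
        · have hmem := Finset.HasAntidiagonal.mem_antidiagonal.mp hij
          have hlt : ij.2 < k := by omega
          rw [if_pos h1, piM_comm he (L' ij.1 e) (L' ij.2 b), hE ij.1,
            (ih ij.2 hlt).2.2.2.1 b hb]
          simp only [zero_mul, mul_zero, add_zero, sub_zero, zero_add, sub_self]
        · rw [if_neg h1]
      rw [h0k, hrest, add_zero] at key
      exact key
    · -- p2-values commute with A
      intro b hb a ha
      have hbr := hL'LHD.2 k a b
      rw [show a * b - b * a = (0 : R) by rw [mulAB he ha hb, mulBA he hb ha, sub_self],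
        map_zero] at hbr
      have key : e * (∑ ij ∈ antidiagonal k,
          (L' ij.1 a * L' ij.2 b - L' ij.2 b * L' ij.1 a)) * e = 0 := by
        rw [← hbr, mul_zero, zero_mul]
      rw [sand_sum, ad_split_fst k
        (fun ij => e * (L' ij.1 a * L' ij.2 b - L' ij.2 b * L' ij.1 a) * e)] at key
      have hrest : (∑ ij ∈ antidiagonal k, if 1 ≤ ij.1 then
          e * (L' ij.1 a * L' ij.2 b - L' ij.2 b * L' ij.1 a) * e else 0) = 0 := by
        refine Finset.sum_eq_zero fun ij hij => ?_
        by_cases h1 : 1 ≤ ij.1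
        · have hmem := Finset.HasAntidiagonal.mem_antidiagonal.mp hij
          have hlt : ij.2 < k := by omega
          rw [if_pos h1, piA_comm he htri,
            ← (ih ij.2 hlt).2.2.2.2.1 b hb (e * (L' ij.1 a) * e) (sandA he _), sub_self]
        · rw [if_neg h1]
      rw [hrest, add_zero, piA_comm he htri, hL'0 a, ha] at key
      have := sub_eq_zero.mp key
      exact this.symm
    · -- q1-values commute with B
      intro a ha b hb
      have hbr := hL'LHD.2 k a b
      rw [show a * b - b * a = (0 : R) by rw [mulAB he ha hb, mulBA he hb ha, sub_self],
        map_zero] at hbr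
      have key : (1 - e) * (∑ ij ∈ antidiagonal k,
          (L' ij.1 a * L' ij.2 b - L' ij.2 b * L' ij.1 a)) * (1 - e) = 0 := by
        rw [← hbr, mul_zero, zero_mul]
      rw [sand_sum, ad_split_snd k
        (fun ij => (1 - e) * (L' ij.1 a * L' ij.2 b - L' ij.2 b * L' ij.1 a) * (1 - e))] at key
      have hrest : (∑ ij ∈ antidiagonal k, if 1 ≤ ij.2 then
          (1 - e) * (L' ij.1 a * L' ij.2 b - L' ij.2 b * L' ij.1 a) * (1 - e) else 0) = 0 := by
        refine Finset.sum_eq_zero fun ij hij => ?_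
        by_cases h2 : 1 ≤ ij.2
        · have hmem := Finset.HasAntidiagonal.mem_antidiagonal.mp hij
          have hlt : ij.1 < k := by omega
          rw [if_pos h2, piB_comm he htri,
            (ih ij.1 hlt).2.2.2.2.2 a ha ((1 - e) * (L' ij.2 b) * (1 - e)) (sandB he _),
            sub_self]
        · rw [if_neg h2]
      rw [hrest, add_zero, piB_comm he htri, hL'0 b, hb] at key
      exact sub_eq_zero.mp key
  refine ⟨fun j => -(wseq L e j),
    fun k => (sandLR 𝕜 e e).comp ((L' k).comp (sandLR 𝕜 e e)),
    fun k => (sandLR 𝕜 e e).comp ((L' k).comp (sandLR 𝕜 (1 - e) (1 - e))),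
    fun k => (sandLR 𝕜 (1 - e) (1 - e)).comp ((L' k).comp (sandLR 𝕜 e e)),
    fun k => (sandLR 𝕜 (1 - e) (1 - e)).comp ((L' k).comp (sandLR 𝕜 (1 - e) (1 - e))),
    fun k => (sandLR 𝕜 e (1 - e)).comp ((L' k).comp (sandLR 𝕜 e (1 - e))),
    ?_, ?_, ?_, ?_, ?_, ?_, ?_, ?_, ?_, ?_, ?_, ?_, ?_, ?_⟩
  · -- m j ∈ M
    intro j _
    exact (mem_corner_ef he).mpr (by rw [mul_neg, neg_mul, wseq_mem L he j])
  · -- p1 0 a = a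
    intro a ha
    replace ha := (mem_corner_ee he).mp ha
    simp only [LinearMap.coe_comp, Function.comp_apply, sandLR_apply]
    rw [ha, hL'0 a, ha]
  · -- q2 0 b = b
    intro b hb
    replace hb := (mem_corner_ff he).mp hb
    simp only [LinearMap.coe_comp, Function.comp_apply, sandLR_apply]
    rw [hb, hL'0 b, hb]
  · -- p2 0 b = 0
    intro b hb
    replace hb := (mem_corner_ff he).mp hb
    simp only [LinearMap.coe_comp, Function.comp_apply, sandLR_apply]
    rw [hb, hL'0 b, heB he hb, zero_mul]
  · -- q1 0 a = 0
    intro a ha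
    replace ha := (mem_corner_ee he).mp ha
    simp only [LinearMap.coe_comp, Function.comp_apply, sandLR_apply]
    rw [ha, hL'0 a, hfA he ha, zero_mul]
  · -- f3 0 x = x
    intro x hx
    replace hx := (mem_corner_ef he).mp hx
    simp only [LinearMap.coe_comp, Function.comp_apply, sandLR_apply]
    rw [hx, hL'0 x, hx]
  · -- ranges
    intro k _
    refine ⟨?_, ?_, ?_, ?_, ?_⟩
    · intro a _
      exact ⟨L' k (sandLR 𝕜 e e a), rfl⟩
    · intro b hb
      replace hb := (mem_corner_ff he).mp hb
      refine ⟨⟨L' k (sandLR 𝕜 (1 - e) (1 - e) b), rfl⟩, fun y hy => ?_⟩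
      replace hy := (mem_corner_ee he).mp hy
      simp only [LinearMap.coe_comp, Function.comp_apply, sandLR_apply]
      rw [hb]
      exact (hQ k).2.2.2.2.1 b hb y hy
    · intro a ha
      replace ha := (mem_corner_ee he).mp ha
      refine ⟨⟨L' k (sandLR 𝕜 e e a), rfl⟩, fun y hy => ?_⟩
      replace hy := (mem_corner_ff he).mp hy
      simp only [LinearMap.coe_comp, Function.comp_apply, sandLR_apply]
      rw [ha]
      exact (hQ k).2.2.2.2.2 a ha y hy
    · intro b _
      exact ⟨L' k (sandLR 𝕜 (1 - e) (1 - e) b), rfl⟩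
    · intro x _
      exact ⟨L' k (sandLR 𝕜 e (1 - e) x), rfl⟩
  · -- the presentation (0)
    intro k hk a ha x hx b hb
    replace ha := (mem_corner_ee he).mp ha
    replace hx := (mem_corner_ef he).mp hx
    replace hb := (mem_corner_ff he).mp hb
    simp only [LinearMap.coe_comp, Function.comp_apply, sandLR_apply]
    rw [ha, hx, hb, Finset.sum_filter, hrec k (a + x + b)]
    have hval : ∀ i j, 1 ≤ i → adL 𝕜 (wseq L e i) (L' j (a + x + b))
        = (e * (L' j a) * e + e * (L' j b) * e) * (-(wseq L e i))
          - (-(wseq L e i)) * ((1 - e) * (L' j a) * (1 - e)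
              + (1 - e) * (L' j b) * (1 - e)) := by
      intro i j _
      rw [adL_apply, M_mul_left he htri (wseq_mem L he i) _,
        M_mul_right he htri (wseq_mem L he i) _, map_add, map_add,
        sand_add, sand_add, sand_add, sand_add,
        (hQ j).2.1 x hx, (hQ j).1 x hx]
      noncomm_ring
    have hcor : (∑ ij ∈ antidiagonal k,
        if 1 ≤ ij.1 then adL 𝕜 (wseq L e ij.1) (L' ij.2 (a + x + b)) else 0)
        = ∑ ij ∈ antidiagonal k, (if 1 ≤ ij.1 then
            ((e * (L' ij.2 a) * e + e * (L' ij.2 b) * e) * (-(wseq L e ij.1))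
              - (-(wseq L e ij.1)) * ((1 - e) * (L' ij.2 a) * (1 - e)
                  + (1 - e) * (L' ij.2 b) * (1 - e))) else 0) := by
      refine Finset.sum_congr rfl fun ij _ => ?_
      by_cases h1 : 1 ≤ ij.1
      · rw [if_pos h1, if_pos h1, hval ij.1 ij.2 h1]
      · rw [if_neg h1, if_neg h1]
    have hswap : (∑ ij ∈ antidiagonal k, (if 1 ≤ ij.1 then
          ((e * (L' ij.2 a) * e + e * (L' ij.2 b) * e) * (-(wseq L e ij.1))
            - (-(wseq L e ij.1)) * ((1 - e) * (L' ij.2 a) * (1 - e)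
                + (1 - e) * (L' ij.2 b) * (1 - e))) else 0))
        = ∑ ij ∈ antidiagonal k, (if 1 ≤ ij.2 then
          ((e * (L' ij.1 a) * e + e * (L' ij.1 b) * e) * (-(wseq L e ij.2))
            - (-(wseq L e ij.2)) * ((1 - e) * (L' ij.1 a) * (1 - e)
                + (1 - e) * (L' ij.1 b) * (1 - e))) else 0) :=
      ad_swap k (fun i j => if 1 ≤ i then
          ((e * (L' j a) * e + e * (L' j b) * e) * (-(wseq L e i))
            - (-(wseq L e i)) * ((1 - e) * (L' j a) * (1 - e)
                + (1 - e) * (L' j b) * (1 - e))) else 0)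
    have hdecA : L' k a = e * (L' k a) * e + (1 - e) * (L' k a) * (1 - e) := by
      have hd := peirce_decomp he htri (L' k a)
      rw [(hQ k).2.2.1 a ha, add_zero] at hd
      exact hd.symm
    have hdecX : L' k x = e * (L' k x) * (1 - e) := by
      have hd := peirce_decomp he htri (L' k x)
      rw [(hQ k).1 x hx, (hQ k).2.1 x hx, zero_add, add_zero] at hd
      exact hd.symm
    have hdecB : L' k b = e * (L' k b) * e + (1 - e) * (L' k b) * (1 - e) := by
      have hd := peirce_decomp he htri (L' k b)
      rw [(hQ k).2.2.2.1 b hb, add_zero] at hd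
      exact hd.symm
    rw [map_add, map_add, hcor, hswap]
    conv_lhs => rw [hdecA, hdecX, hdecB]
    abel
  · -- (1) for p1
    intro k a ha a' ha'
    replace ha := (mem_corner_ee he).mp ha
    replace ha' := (mem_corner_ee he).mp ha'
    simp only [LinearMap.coe_comp, Function.comp_apply, sandLR_apply]
    rw [ha, ha',
      show e * (a * a' - a' * a) * e = a * a' - a' * a by
        rw [sand_sub, memAA he ha ha', memAA he ha' ha],
      hL'LHD.2 k a a', sand_sum]
    exact Finset.sum_congr rfl fun ij _ => piA_comm he htri (L' ij.1 a) (L' ij.2 a')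
  · -- (1) for q2
    intro k b hb b' hb'
    replace hb := (mem_corner_ff he).mp hb
    replace hb' := (mem_corner_ff he).mp hb'
    simp only [LinearMap.coe_comp, Function.comp_apply, sandLR_apply]
    rw [hb, hb',
      show (1 - e) * (b * b' - b' * b) * (1 - e) = b * b' - b' * b by
        rw [sand_sub, memBB he hb hb', memBB he hb' hb],
      hL'LHD.2 k b b', sand_sum]
    exact Finset.sum_congr rfl fun ij _ => piB_comm he htri (L' ij.1 b) (L' ij.2 b')
  · -- (2) for q1
    intro k _ a ha a' ha'
    replace ha := (mem_corner_ee he).mp ha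
    replace ha' := (mem_corner_ee he).mp ha'
    simp only [LinearMap.coe_comp, Function.comp_apply, sandLR_apply]
    rw [show e * (a * a' - a' * a) * e = a * a' - a' * a by
        rw [sand_sub, memAA he ha ha', memAA he ha' ha],
      hL'LHD.2 k a a', sand_sum]
    refine Finset.sum_eq_zero fun ij _ => ?_
    rw [piB_comm he htri,
      (hQ ij.1).2.2.2.2.2 a ha ((1 - e) * (L' ij.2 a') * (1 - e)) (sandB he _), sub_self]
  · -- (2) for p2
    intro k _ b hb b' hb'
    replace hb := (mem_corner_ff he).mp hb
    replace hb' := (mem_corner_ff he).mp hb'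
    simp only [LinearMap.coe_comp, Function.comp_apply, sandLR_apply]
    rw [show (1 - e) * (b * b' - b' * b) * (1 - e) = b * b' - b' * b by
        rw [sand_sub, memBB he hb hb', memBB he hb' hb],
      hL'LHD.2 k b b', sand_sum]
    refine Finset.sum_eq_zero fun ij _ => ?_
    rw [piA_comm he htri,
      ← (hQ ij.1).2.2.2.2.1 b hb (e * (L' ij.2 b') * e) (sandA he _), sub_self]
  · -- (3) first equation
    intro k _ a ha x hx
    replace ha := (mem_corner_ee he).mp ha
    replace hx := (mem_corner_ef he).mp hx
    simp only [LinearMap.coe_comp, Function.comp_apply, sandLR_apply]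
    rw [ha, hx, memAM he ha hx,
      show a * x = a * x - x * a by rw [mulMA he hx ha, sub_zero],
      hL'LHD.2 k a x, sand_sum]
    refine Finset.sum_congr rfl fun ij _ => ?_
    rw [piM_comm he (L' ij.1 a) (L' ij.2 x), (hQ ij.1).2.2.1 a ha,
      (hQ ij.2).1 x hx, (hQ ij.2).2.1 x hx]
    simp only [zero_mul, mul_zero, add_zero, zero_add, sub_zero]
  · -- (3) second equation
    intro k _ x hx b hb
    replace hx := (mem_corner_ef he).mp hx
    replace hb := (mem_corner_ff he).mp hb
    simp only [LinearMap.coe_comp, Function.comp_apply, sandLR_apply]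
    rw [hx, hb, memMB he hx hb,
      show x * b = x * b - b * x by rw [mulBM he hb hx, sub_zero],
      hL'LHD.2 k x b, sand_sum]
    have hterm : ∀ ij : ℕ × ℕ, ij ∈ antidiagonal k →
        e * (L' ij.1 x * L' ij.2 b - L' ij.2 b * L' ij.1 x) * (1 - e)
          = (e * (L' ij.1 x) * (1 - e)) * ((1 - e) * (L' ij.2 b) * (1 - e))
            - (e * (L' ij.2 b) * e) * (e * (L' ij.1 x) * (1 - e)) := by
      intro ij _
      rw [piM_comm he (L' ij.1 x) (L' ij.2 b), (hQ ij.1).1 x hx,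
        (hQ ij.2).2.2.2.1 b hb]
      simp only [zero_mul, mul_zero, add_zero, zero_add, sub_zero]
    rw [Finset.sum_congr rfl hterm]
    exact ad_swap k (fun i j => (e * (L' i x) * (1 - e)) * ((1 - e) * (L' j b) * (1 - e))
      - (e * (L' j b) * e) * (e * (L' i x) * (1 - e)))

end Forward

section Backward
variable {𝕜 R : Type*} [CommRing 𝕜] [Ring R] [Algebra 𝕜 R]

lemma tri_mul {e : R} (he : e * e = e) {P X Q P' X' Q' : R}
    (hP : e * P * e = P) (hX : e * X * (1 - e) = X) (hQ : (1 - e) * Q * (1 - e) = Q)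
    (hP' : e * P' * e = P') (hX' : e * X' * (1 - e) = X')
    (hQ' : (1 - e) * Q' * (1 - e) = Q') :
    (P + X + Q) * (P' + X' + Q') = P * P' + P * X' + X * Q' + Q * Q' := by
  have key : (P + X + Q) * (P' + X' + Q') - (P * P' + P * X' + X * Q' + Q * Q')
      = P * Q' + X * P' + X * X' + Q * P' + Q * X' := by noncomm_ring
  rw [mulAB he hP hQ', mulMA he hX hP', mulMM he hX hX', mulBA he hQ hP',
    mulBM he hQ hX'] at key
  simp only [add_zero, zero_add] at key
  exact sub_eq_zero.mp key

lemma backward_aux (e : R) (he : e * e = e)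
    (htri : ∀ r : R, (1 - e) * r * e = 0)
    (L : ℕ → R →ₗ[𝕜] R) (hL0 : L 0 = LinearMap.id)
    (hyp : ∃ (m : ℕ → R) (p1 p2 q1 q2 f3 : ℕ → R →ₗ[𝕜] R),
        -- the elements `m j ∈ M` for `j ≥ 1`
        (∀ j, 1 ≤ j → m j ∈ corner e (1 - e)) ∧
        -- conventions at index 0
        (∀ a ∈ corner e e, p1 0 a = a) ∧
        (∀ b ∈ corner (1 - e) (1 - e), q2 0 b = b) ∧
        (∀ b ∈ corner (1 - e) (1 - e), p2 0 b = 0) ∧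
        (∀ a ∈ corner e e, q1 0 a = 0) ∧
        (∀ x ∈ corner e (1 - e), f3 0 x = x) ∧
        -- ranges of the entry maps
        (∀ k, 1 ≤ k →
          (∀ a ∈ corner e e, p1 k a ∈ corner e e) ∧
          (∀ b ∈ corner (1 - e) (1 - e), p2 k b ∈ cornerCenter e) ∧
          (∀ a ∈ corner e e, q1 k a ∈ cornerCenter (1 - e)) ∧
          (∀ b ∈ corner (1 - e) (1 - e), q2 k b ∈ corner (1 - e) (1 - e)) ∧
          (∀ x ∈ corner e (1 - e), f3 k x ∈ corner e (1 - e))) ∧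
        -- (0): the presentation of `L k`
        (∀ k, 1 ≤ k → ∀ a ∈ corner e e, ∀ x ∈ corner e (1 - e),
          ∀ b ∈ corner (1 - e) (1 - e),
          L k (a + x + b) =
            p1 k a + p2 k b +
              (∑ ij ∈ (Finset.HasAntidiagonal.antidiagonal k).filter (fun ij => 1 ≤ ij.2),
                ((p1 ij.1 a + p2 ij.1 b) * m ij.2 -
                  m ij.2 * (q1 ij.1 a + q2 ij.1 b))) +
              f3 k x + q1 k a + q2 k b) ∧
        -- (1): `p1` and `q2` are Lie higher derivations on `A` resp. `B`
        (∀ (k : ℕ), ∀ a ∈ corner e e, ∀ a' ∈ corner e e,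
          p1 k (a * a' - a' * a) =
            ∑ ij ∈ Finset.HasAntidiagonal.antidiagonal k,
              (p1 ij.1 a * p1 ij.2 a' - p1 ij.2 a' * p1 ij.1 a)) ∧
        (∀ (k : ℕ), ∀ b ∈ corner (1 - e) (1 - e), ∀ b' ∈ corner (1 - e) (1 - e),
          q2 k (b * b' - b' * b) =
            ∑ ij ∈ Finset.HasAntidiagonal.antidiagonal k,
              (q2 ij.1 b * q2 ij.2 b' - q2 ij.2 b' * q2 ij.1 b)) ∧
        -- (2): `q1` and `p2` vanish on commutators
        (∀ k, 1 ≤ k → ∀ a ∈ corner e e, ∀ a' ∈ corner e e,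
          q1 k (a * a' - a' * a) = 0) ∧
        (∀ k, 1 ≤ k → ∀ b ∈ corner (1 - e) (1 - e), ∀ b' ∈ corner (1 - e) (1 - e),
          p2 k (b * b' - b' * b) = 0) ∧
        -- (3): the module equations for `f3`
        (∀ k, 1 ≤ k → ∀ a ∈ corner e e, ∀ x ∈ corner e (1 - e),
          f3 k (a * x) =
            ∑ ij ∈ Finset.HasAntidiagonal.antidiagonal k,
              (p1 ij.1 a * f3 ij.2 x - f3 ij.2 x * q1 ij.1 a)) ∧
        (∀ k, 1 ≤ k → ∀ x ∈ corner e (1 - e), ∀ b ∈ corner (1 - e) (1 - e),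
          f3 k (x * b) =
            ∑ ij ∈ Finset.HasAntidiagonal.antidiagonal k,
              (f3 ij.2 x * q2 ij.1 b - p2 ij.1 b * f3 ij.2 x))) : IsLieHigherDerivation 𝕜 R L := by
  classical
  obtain ⟨m, p1, p2, q1, q2, f3, hm, h0p1, h0q2, h0p2, h0q1, h0f3, hrange, hpres,
    h1a, h1b, h2a, h2b, h3a, h3b⟩ := hyp
  have hmM : ∀ j, 1 ≤ j → e * m j * (1 - e) = m j :=
    fun j hj => (mem_corner_ef he).mp (hm j hj)
  set L2 : ℕ → R →ₗ[𝕜] R := fun k => if k = 0 then LinearMap.id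
    else (p1 k).comp (sandLR 𝕜 e e) + (p2 k).comp (sandLR 𝕜 (1 - e) (1 - e))
      + (f3 k).comp (sandLR 𝕜 e (1 - e)) + (q1 k).comp (sandLR 𝕜 e e)
      + (q2 k).comp (sandLR 𝕜 (1 - e) (1 - e)) with hL2def
  have hL2eval : ∀ k (z : R), L2 k z
      = p1 k (e * z * e) + p2 k ((1 - e) * z * (1 - e)) + f3 k (e * z * (1 - e))
        + q1 k (e * z * e) + q2 k ((1 - e) * z * (1 - e)) := by
    intro k z
    rcases Nat.eq_zero_or_pos k with h | h
    · subst h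
      simp only [hL2def, if_pos rfl, LinearMap.id_coe, id_eq]
      rw [h0p1 _ ⟨z, rfl⟩, h0p2 _ ⟨z, rfl⟩, h0f3 _ ⟨z, rfl⟩, h0q1 _ ⟨z, rfl⟩,
        h0q2 _ ⟨z, rfl⟩, add_zero, add_zero]
      exact (peirce_decomp he htri z).symm
    · simp only [hL2def, if_neg (show ¬k = 0 by omega), LinearMap.add_apply,
        LinearMap.coe_comp, Function.comp_apply, sandLR_apply]
  -- membership facts
  have hp1m : ∀ i (z : R), e * p1 i (e * z * e) * e = p1 i (e * z * e) := by
    intro i z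
    rcases Nat.eq_zero_or_pos i with h | h
    · subst h; rw [h0p1 _ ⟨z, rfl⟩]; exact sandA he z
    · exact (mem_corner_ee he).mp ((hrange i h).1 _ ⟨z, rfl⟩)
  have hp2m : ∀ i (z : R), e * p2 i ((1 - e) * z * (1 - e)) * e
      = p2 i ((1 - e) * z * (1 - e)) := by
    intro i z
    rcases Nat.eq_zero_or_pos i with h | h
    · subst h; rw [h0p2 _ ⟨z, rfl⟩, mul_zero, zero_mul]
    · exact (mem_corner_ee he).mp ((hrange i h).2.1 _ ⟨z, rfl⟩).1
  have hq1m : ∀ i (z : R), (1 - e) * q1 i (e * z * e) * (1 - e) = q1 i (e * z * e) := by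
    intro i z
    rcases Nat.eq_zero_or_pos i with h | h
    · subst h; rw [h0q1 _ ⟨z, rfl⟩, mul_zero, zero_mul]
    · exact (mem_corner_ff he).mp ((hrange i h).2.2.1 _ ⟨z, rfl⟩).1
  have hq2m : ∀ i (z : R), (1 - e) * q2 i ((1 - e) * z * (1 - e)) * (1 - e)
      = q2 i ((1 - e) * z * (1 - e)) := by
    intro i z
    rcases Nat.eq_zero_or_pos i with h | h
    · subst h; rw [h0q2 _ ⟨z, rfl⟩]; exact sandB he z
    · exact (mem_corner_ff he).mp ((hrange i h).2.2.2.1 _ ⟨z, rfl⟩)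
  have hf3m : ∀ i (z : R), e * f3 i (e * z * (1 - e)) * (1 - e) = f3 i (e * z * (1 - e)) := by
    intro i z
    rcases Nat.eq_zero_or_pos i with h | h
    · subst h; rw [h0f3 _ ⟨z, rfl⟩]; exact sandM he z
    · exact (mem_corner_ef he).mp ((hrange i h).2.2.2.2 _ ⟨z, rfl⟩)
  have hPm : ∀ i (z : R), e * (p1 i (e * z * e) + p2 i ((1 - e) * z * (1 - e))) * e
      = p1 i (e * z * e) + p2 i ((1 - e) * z * (1 - e)) := by
    intro i z; rw [sand_add, hp1m, hp2m]
  have hQm : ∀ i (z : R),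
      (1 - e) * (q1 i (e * z * e) + q2 i ((1 - e) * z * (1 - e))) * (1 - e)
      = q1 i (e * z * e) + q2 i ((1 - e) * z * (1 - e)) := by
    intro i z; rw [sand_add, hq1m, hq2m]
  -- centrality facts
  have hp2c : ∀ i (z y : R), e * y * e = y →
      p2 i ((1 - e) * z * (1 - e)) * y = y * p2 i ((1 - e) * z * (1 - e)) := by
    intro i z y hy
    rcases Nat.eq_zero_or_pos i with h | h
    · subst h; rw [h0p2 _ ⟨z, rfl⟩, mul_zero, zero_mul]
    · exact ((hrange i h).2.1 _ ⟨z, rfl⟩).2 y ((mem_corner_ee he).mpr hy)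
  have hq1c : ∀ i (z y : R), (1 - e) * y * (1 - e) = y →
      q1 i (e * z * e) * y = y * q1 i (e * z * e) := by
    intro i z y hy
    rcases Nat.eq_zero_or_pos i with h | h
    · subst h; rw [h0q1 _ ⟨z, rfl⟩, mul_zero, zero_mul]
    · exact ((hrange i h).2.2.1 _ ⟨z, rfl⟩).2 y ((mem_corner_ff he).mpr hy)
  have hL2g : ∀ i (z : R), L2 i z
      = (p1 i (e * z * e) + p2 i ((1 - e) * z * (1 - e))) + f3 i (e * z * (1 - e))
        + (q1 i (e * z * e) + q2 i ((1 - e) * z * (1 - e))) := by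
    intro i z; rw [hL2eval]; abel
  -- L2 is a Lie higher derivation
  have hL2LHD : IsLieHigherDerivation 𝕜 R L2 := by
    constructor
    · simp [hL2def]
    · intro k z z'
      rcases Nat.eq_zero_or_pos k with hk | hk
      · subst hk
        simp [hL2def]
      · have hterm : ∀ ij : ℕ × ℕ, ij ∈ antidiagonal k →
            L2 ij.1 z * L2 ij.2 z' - L2 ij.2 z' * L2 ij.1 z
            = (p1 ij.1 (e * z * e) * p1 ij.2 (e * z' * e)
                - p1 ij.2 (e * z' * e) * p1 ij.1 (e * z * e))
              + (q2 ij.1 ((1 - e) * z * (1 - e)) * q2 ij.2 ((1 - e) * z' * (1 - e))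
                - q2 ij.2 ((1 - e) * z' * (1 - e)) * q2 ij.1 ((1 - e) * z * (1 - e)))
              + (p1 ij.1 (e * z * e) * f3 ij.2 (e * z' * (1 - e))
                + p2 ij.1 ((1 - e) * z * (1 - e)) * f3 ij.2 (e * z' * (1 - e))
                + f3 ij.1 (e * z * (1 - e)) * q1 ij.2 (e * z' * e)
                + f3 ij.1 (e * z * (1 - e)) * q2 ij.2 ((1 - e) * z' * (1 - e))
                - p1 ij.2 (e * z' * e) * f3 ij.1 (e * z * (1 - e))
                - p2 ij.2 ((1 - e) * z' * (1 - e)) * f3 ij.1 (e * z * (1 - e))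
                - f3 ij.2 (e * z' * (1 - e)) * q1 ij.1 (e * z * e)
                - f3 ij.2 (e * z' * (1 - e)) * q2 ij.1 ((1 - e) * z * (1 - e))) := by
          intro ij _
          rw [hL2g ij.1 z, hL2g ij.2 z',
            tri_mul he (hPm ij.1 z) (hf3m ij.1 z) (hQm ij.1 z)
              (hPm ij.2 z') (hf3m ij.2 z') (hQm ij.2 z'),
            tri_mul he (hPm ij.2 z') (hf3m ij.2 z') (hQm ij.2 z')
              (hPm ij.1 z) (hf3m ij.1 z) (hQm ij.1 z)]
          have d1 : p1 ij.1 (e * z * e) * p2 ij.2 ((1 - e) * z' * (1 - e))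
              - p2 ij.2 ((1 - e) * z' * (1 - e)) * p1 ij.1 (e * z * e) = 0 :=
            sub_eq_zero.mpr (hp2c ij.2 z' _ (hp1m ij.1 z)).symm
          have d2 : p2 ij.1 ((1 - e) * z * (1 - e)) * p1 ij.2 (e * z' * e)
              - p1 ij.2 (e * z' * e) * p2 ij.1 ((1 - e) * z * (1 - e)) = 0 :=
            sub_eq_zero.mpr (hp2c ij.1 z _ (hp1m ij.2 z'))
          have d3 : p2 ij.1 ((1 - e) * z * (1 - e)) * p2 ij.2 ((1 - e) * z' * (1 - e))
              - p2 ij.2 ((1 - e) * z' * (1 - e)) * p2 ij.1 ((1 - e) * z * (1 - e)) = 0 :=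
            sub_eq_zero.mpr (hp2c ij.1 z _ (hp2m ij.2 z'))
          have d4 : q1 ij.1 (e * z * e) * q2 ij.2 ((1 - e) * z' * (1 - e))
              - q2 ij.2 ((1 - e) * z' * (1 - e)) * q1 ij.1 (e * z * e) = 0 :=
            sub_eq_zero.mpr (hq1c ij.1 z _ (hq2m ij.2 z'))
          have d5 : q2 ij.1 ((1 - e) * z * (1 - e)) * q1 ij.2 (e * z' * e)
              - q1 ij.2 (e * z' * e) * q2 ij.1 ((1 - e) * z * (1 - e)) = 0 :=
            sub_eq_zero.mpr (hq1c ij.2 z' _ (hq2m ij.1 z)).symm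
          have d6 : q1 ij.1 (e * z * e) * q1 ij.2 (e * z' * e)
              - q1 ij.2 (e * z' * e) * q1 ij.1 (e * z * e) = 0 :=
            sub_eq_zero.mpr (hq1c ij.1 z _ (hq1m ij.2 z'))
          have key : ∀ u1 u2 v1 v2 w1 w2 s1 s2 t1 t2 x1 x2 : R,
              ((u1 + v1) * (u2 + v2) + (u1 + v1) * w2 + w1 * (s2 + t2)
                  + (s1 + t1) * (s2 + t2))
                - ((u2 + v2) * (u1 + v1) + (u2 + v2) * w1 + w2 * (s1 + t1)
                  + (s2 + t2) * (s1 + t1))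
              = ((u1 * u2 - u2 * u1) + (t1 * t2 - t2 * t1)
                + (u1 * w2 + v1 * w2 + w1 * s2 + w1 * t2
                  - u2 * w1 - v2 * w1 - w2 * s1 - w2 * t1))
                + ((u1 * v2 - v2 * u1) + (v1 * u2 - u2 * v1) + (v1 * v2 - v2 * v1))
                + ((s1 * t2 - t2 * s1) + (t1 * s2 - s2 * t1) + (s1 * s2 - s2 * s1)) := by
            intro u1 u2 v1 v2 w1 w2 s1 s2 t1 t2 x1 x2
            noncomm_ring
          rw [key (p1 ij.1 (e * z * e)) (p1 ij.2 (e * z' * e))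
              (p2 ij.1 ((1 - e) * z * (1 - e))) (p2 ij.2 ((1 - e) * z' * (1 - e)))
              (f3 ij.1 (e * z * (1 - e))) (f3 ij.2 (e * z' * (1 - e)))
              (q1 ij.1 (e * z * e)) (q1 ij.2 (e * z' * e))
              (q2 ij.1 ((1 - e) * z * (1 - e))) (q2 ij.2 ((1 - e) * z' * (1 - e))) 0 0,
            d1, d2, d3, d4, d5, d6]
          abel
        rw [Finset.sum_congr rfl hterm]
        -- expand the left-hand side
        rw [hL2eval k (z * z' - z' * z),
          piA_comm he htri z z', piB_comm he htri z z', piM_comm he z z',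
          h2a k hk _ ⟨z, rfl⟩ _ ⟨z', rfl⟩, h2b k hk _ ⟨z, rfl⟩ _ ⟨z', rfl⟩,
          h1a k _ ⟨z, rfl⟩ _ ⟨z', rfl⟩, h1b k _ ⟨z, rfl⟩ _ ⟨z', rfl⟩,
          map_sub, map_add, map_add,
          h3a k hk _ ⟨z, rfl⟩ _ ⟨z', rfl⟩, h3b k hk _ ⟨z, rfl⟩ _ ⟨z', rfl⟩,
          h3a k hk _ ⟨z', rfl⟩ _ ⟨z, rfl⟩, h3b k hk _ ⟨z', rfl⟩ _ ⟨z, rfl⟩]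
        simp only [Finset.sum_add_distrib, Finset.sum_sub_distrib]
        have hs1 : (∑ ij ∈ antidiagonal k,
            f3 ij.1 (e * z * (1 - e)) * q1 ij.2 (e * z' * e))
            = ∑ ij ∈ antidiagonal k, f3 ij.2 (e * z * (1 - e)) * q1 ij.1 (e * z' * e) :=
          ad_swap k (fun i j => f3 i (e * z * (1 - e)) * q1 j (e * z' * e))
        have hs2 : (∑ ij ∈ antidiagonal k,
            f3 ij.1 (e * z * (1 - e)) * q2 ij.2 ((1 - e) * z' * (1 - e)))
            = ∑ ij ∈ antidiagonal k,
              f3 ij.2 (e * z * (1 - e)) * q2 ij.1 ((1 - e) * z' * (1 - e)) :=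
          ad_swap k (fun i j => f3 i (e * z * (1 - e)) * q2 j ((1 - e) * z' * (1 - e)))
        have hs3 : (∑ ij ∈ antidiagonal k,
            p1 ij.2 (e * z' * e) * f3 ij.1 (e * z * (1 - e)))
            = ∑ ij ∈ antidiagonal k, p1 ij.1 (e * z' * e) * f3 ij.2 (e * z * (1 - e)) :=
          ad_swap k (fun i j => p1 j (e * z' * e) * f3 i (e * z * (1 - e)))
        have hs4 : (∑ ij ∈ antidiagonal k,
            p2 ij.2 ((1 - e) * z' * (1 - e)) * f3 ij.1 (e * z * (1 - e)))
            = ∑ ij ∈ antidiagonal k,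
              p2 ij.1 ((1 - e) * z' * (1 - e)) * f3 ij.2 (e * z * (1 - e)) :=
          ad_swap k (fun i j => p2 j ((1 - e) * z' * (1 - e)) * f3 i (e * z * (1 - e)))
        rw [hs1, hs2, hs3, hs4]
        abel
  -- reconstruct L from L2
  have hwM : ∀ j, 1 ≤ j → e * (-(m j)) * (1 - e) = -(m j) := by
    intro j hj; rw [mul_neg, neg_mul, hmM j hj]
  have hLeq : L = convComp (innSeq 𝕜 (fun j => -(m j))) L2 := by
    funext k
    ext z
    rw [convComp_innSeq_apply]
    rcases Nat.eq_zero_or_pos k with hk | hk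
    · subst hk
      rw [hL0]
      simp [hL2def]
    · have hp := hpres k hk _ ⟨z, rfl⟩ _ ⟨z, rfl⟩ _ ⟨z, rfl⟩
      rw [peirce_decomp he htri z] at hp
      rw [hp, hL2eval k z, Finset.sum_filter]
      have hval : ∀ ij : ℕ × ℕ, ij ∈ antidiagonal k →
          (if 1 ≤ ij.1 then adL 𝕜 (-(m ij.1)) (L2 ij.2 z) else 0)
          = (if 1 ≤ ij.1 then
              ((p1 ij.2 (e * z * e) + p2 ij.2 ((1 - e) * z * (1 - e))) * m ij.1
                - m ij.1 * (q1 ij.2 (e * z * e) + q2 ij.2 ((1 - e) * z * (1 - e))))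
            else 0) := by
        intro ij _
        by_cases h1 : 1 ≤ ij.1
        · rw [if_pos h1, if_pos h1]
          have hv : adL 𝕜 (-(m ij.1)) (L2 ij.2 z)
              = (L2 ij.2 z) * m ij.1 - m ij.1 * (L2 ij.2 z) := by
            rw [adL_apply]; noncomm_ring
          rw [hv, M_mul_right he htri (hmM ij.1 h1) _, M_mul_left he htri (hmM ij.1 h1) _]
          have hA : e * (L2 ij.2 z) * e
              = p1 ij.2 (e * z * e) + p2 ij.2 ((1 - e) * z * (1 - e)) := by
            rw [hL2g ij.2 z, sand_add, sand_add, hPm ij.2 z]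
            rw [show e * f3 ij.2 (e * z * (1 - e)) * e = 0 by
                rw [heM he (hf3m ij.2 z), hMe he (hf3m ij.2 z)],
              show e * (q1 ij.2 (e * z * e) + q2 ij.2 ((1 - e) * z * (1 - e))) * e = 0 by
                rw [heB he (hQm ij.2 z), zero_mul],
              add_zero, add_zero]
          have hB : (1 - e) * (L2 ij.2 z) * (1 - e)
              = q1 ij.2 (e * z * e) + q2 ij.2 ((1 - e) * z * (1 - e)) := by
            rw [hL2g ij.2 z, sand_add, sand_add, hQm ij.2 z]
            rw [show (1 - e) * (p1 ij.2 (e * z * e) + p2 ij.2 ((1 - e) * z * (1 - e)))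
                  * (1 - e) = 0 by rw [hfA he (hPm ij.2 z), zero_mul],
              show (1 - e) * f3 ij.2 (e * z * (1 - e)) * (1 - e) = 0 by
                rw [hfM he (hf3m ij.2 z), zero_mul],
              zero_add, zero_add]
          rw [hA, hB]
        · rw [if_neg h1, if_neg h1]
      rw [Finset.sum_congr rfl hval]
      have hsw : (∑ ij ∈ antidiagonal k, if 1 ≤ ij.1 then
            ((p1 ij.2 (e * z * e) + p2 ij.2 ((1 - e) * z * (1 - e))) * m ij.1
              - m ij.1 * (q1 ij.2 (e * z * e) + q2 ij.2 ((1 - e) * z * (1 - e))))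
          else 0)
          = ∑ ij ∈ antidiagonal k, (if 1 ≤ ij.2 then
            ((p1 ij.1 (e * z * e) + p2 ij.1 ((1 - e) * z * (1 - e))) * m ij.2
              - m ij.2 * (q1 ij.1 (e * z * e) + q2 ij.1 ((1 - e) * z * (1 - e))))
          else 0) :=
        ad_swap k (fun i j => if 1 ≤ i then
            ((p1 j (e * z * e) + p2 j ((1 - e) * z * (1 - e))) * m i
              - m i * (q1 j (e * z * e) + q2 j ((1 - e) * z * (1 - e))))
          else 0)
      rw [hsw]
      abel
  rw [hLeq]
  exact convComp_isLHD (innSeq_isLHD he htri hwM) hL2LHD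

end Backward

/-- structure of Lie higher derivations on a triangular algebra,
Peirce form, `fRe = 0`, `A = eRe`, `B = fRf`, `M = eRf`. -/
theorem triangular_lieHigherDerivation_structure {𝕜 R : Type*} [CommRing 𝕜] [Ring R]
    [Algebra 𝕜 R]
    (e : R) (he : e * e = e) (he0 : e ≠ 0) (he1 : e ≠ 1)
    (htri : ∀ r : R, (1 - e) * r * e = 0)
    (L : ℕ → R →ₗ[𝕜] R) (hL0 : L 0 = LinearMap.id) :
    IsLieHigherDerivation 𝕜 R L ↔
      ∃ (m : ℕ → R) (p1 p2 q1 q2 f3 : ℕ → R →ₗ[𝕜] R),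
        -- the elements `m j ∈ M` for `j ≥ 1`
        (∀ j, 1 ≤ j → m j ∈ corner e (1 - e)) ∧
        -- conventions at index 0
        (∀ a ∈ corner e e, p1 0 a = a) ∧
        (∀ b ∈ corner (1 - e) (1 - e), q2 0 b = b) ∧
        (∀ b ∈ corner (1 - e) (1 - e), p2 0 b = 0) ∧
        (∀ a ∈ corner e e, q1 0 a = 0) ∧
        (∀ x ∈ corner e (1 - e), f3 0 x = x) ∧
        -- ranges of the entry maps
        (∀ k, 1 ≤ k →
          (∀ a ∈ corner e e, p1 k a ∈ corner e e) ∧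
          (∀ b ∈ corner (1 - e) (1 - e), p2 k b ∈ cornerCenter e) ∧
          (∀ a ∈ corner e e, q1 k a ∈ cornerCenter (1 - e)) ∧
          (∀ b ∈ corner (1 - e) (1 - e), q2 k b ∈ corner (1 - e) (1 - e)) ∧
          (∀ x ∈ corner e (1 - e), f3 k x ∈ corner e (1 - e))) ∧
        -- (0): the presentation of `L k`
        (∀ k, 1 ≤ k → ∀ a ∈ corner e e, ∀ x ∈ corner e (1 - e),
          ∀ b ∈ corner (1 - e) (1 - e),
          L k (a + x + b) =
            p1 k a + p2 k b +
              (∑ ij ∈ (Finset.HasAntidiagonal.antidiagonal k).filter (fun ij => 1 ≤ ij.2),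
                ((p1 ij.1 a + p2 ij.1 b) * m ij.2 -
                  m ij.2 * (q1 ij.1 a + q2 ij.1 b))) +
              f3 k x + q1 k a + q2 k b) ∧
        -- (1): `p1` and `q2` are Lie higher derivations on `A` resp. `B`
        (∀ (k : ℕ), ∀ a ∈ corner e e, ∀ a' ∈ corner e e,
          p1 k (a * a' - a' * a) =
            ∑ ij ∈ Finset.HasAntidiagonal.antidiagonal k,
              (p1 ij.1 a * p1 ij.2 a' - p1 ij.2 a' * p1 ij.1 a)) ∧
        (∀ (k : ℕ), ∀ b ∈ corner (1 - e) (1 - e), ∀ b' ∈ corner (1 - e) (1 - e),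
          q2 k (b * b' - b' * b) =
            ∑ ij ∈ Finset.HasAntidiagonal.antidiagonal k,
              (q2 ij.1 b * q2 ij.2 b' - q2 ij.2 b' * q2 ij.1 b)) ∧
        -- (2): `q1` and `p2` vanish on commutators
        (∀ k, 1 ≤ k → ∀ a ∈ corner e e, ∀ a' ∈ corner e e,
          q1 k (a * a' - a' * a) = 0) ∧
        (∀ k, 1 ≤ k → ∀ b ∈ corner (1 - e) (1 - e), ∀ b' ∈ corner (1 - e) (1 - e),
          p2 k (b * b' - b' * b) = 0) ∧
        -- (3): the module equations for `f3`
        (∀ k, 1 ≤ k → ∀ a ∈ corner e e, ∀ x ∈ corner e (1 - e),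
          f3 k (a * x) =
            ∑ ij ∈ Finset.HasAntidiagonal.antidiagonal k,
              (p1 ij.1 a * f3 ij.2 x - f3 ij.2 x * q1 ij.1 a)) ∧
        (∀ k, 1 ≤ k → ∀ x ∈ corner e (1 - e), ∀ b ∈ corner (1 - e) (1 - e),
          f3 k (x * b) =
            ∑ ij ∈ Finset.HasAntidiagonal.antidiagonal k,
              (f3 ij.2 x * q2 ij.1 b - p2 ij.1 b * f3 ij.2 x)) := by
  exact ⟨fun hL => forward_aux e he htri L hL0 hL,
    fun h => backward_aux e he htri L hL0 h⟩
end

section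
/- Let A be a unital algebra over a commutative unital ring 𝕜, let D = {D_k}_{k∈ℕ₀} be a higher derivation on A, and let τ = {τ_k}_{k∈ℕ} be a sequence of 𝕜-linear maps on A with τ_k(A) ⊆ Z(A) for all k ≥ 1. Define L_0 = id_A and L_k = D_k + τ_k for k ≥ 1. Then L = {L_k}_{k∈ℕ₀} is a Lie higher derivation on A if and only if τ_k([x,y]) = 0 for all x, y ∈ A and all k ≥ 1. -/
open Finset

private lemma central_comm_aux {A : Type*} [Ring A] {a b c d : A}
    (hc : c ∈ Set.center A) (hd : d ∈ Set.center A) :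
    (a + c) * (b + d) - (b + d) * (a + c) = a * b - b * a := by
  have h1 : c * b = b * c := (Set.mem_center_iff.1 hc).comm b
  have h2 : c * d = d * c := (Set.mem_center_iff.1 hc).comm d
  have h3 : d * a = a * d := (Set.mem_center_iff.1 hd).comm a
  simp only [mul_add, add_mul]
  rw [h1, h2, h3]
  abel

/-- If `D` is a higher derivation on `A` and `τ k` (k ≥ 1) are
central-valued linear maps, then `L` with `L 0 = id` and `L k = D k + τ k` (k ≥ 1) is a
Lie higher derivation iff each `τ k` vanishes on all commutators. -/
theorem lieHigherDerivation_iff_tau_vanishes {𝕜 A : Type*} [CommRing 𝕜] [Ring A]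
    [Algebra 𝕜 A]
    (D : ℕ → A →ₗ[𝕜] A) (hD : IsHigherDerivation 𝕜 A D)
    (τ : ℕ → A →ₗ[𝕜] A) (hτ : ∀ k, 1 ≤ k → ∀ x : A, τ k x ∈ Set.center A)
    (L : ℕ → A →ₗ[𝕜] A) (hL0 : L 0 = LinearMap.id)
    (hLk : ∀ k, 1 ≤ k → L k = D k + τ k) :
    IsLieHigherDerivation 𝕜 A L ↔
      ∀ k, 1 ≤ k → ∀ x y : A, τ k (x * y - y * x) = 0 := by
  -- each L i x decomposes as D i x + central element
  have hdec : ∀ (i : ℕ) (x : A), ∃ c ∈ Set.center A, L i x = D i x + c := by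
    intro i x
    rcases Nat.eq_zero_or_pos i with hi | hi
    · subst hi
      exact ⟨0, Set.zero_mem_center, by simp [hL0, hD.1]⟩
    · exact ⟨τ i x, hτ i hi x, by rw [hLk i hi]; rfl⟩
  have hcomm : ∀ (i j : ℕ) (x y : A),
      L i x * L j y - L j y * L i x = D i x * D j y - D j y * D i x := by
    intro i j x y
    obtain ⟨c, hc, hcx⟩ := hdec i x
    obtain ⟨d, hd, hdy⟩ := hdec j y
    rw [hcx, hdy]
    exact central_comm_aux hc hd
  -- D satisfies the Lie higher derivation identity
  have hDlie : ∀ (k : ℕ) (x y : A),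
      D k (x * y - y * x) =
        ∑ ij ∈ Finset.HasAntidiagonal.antidiagonal k, (D ij.1 x * D ij.2 y - D ij.2 y * D ij.1 x) := by
    intro k x y
    rw [map_sub, hD.2 k x y, hD.2 k y x]
    rw [show (∑ ij ∈ Finset.HasAntidiagonal.antidiagonal k, D ij.1 y * D ij.2 x)
        = ∑ ij ∈ Finset.HasAntidiagonal.antidiagonal k, D ij.2 y * D ij.1 x from
      Finset.sum_nbij' Prod.swap Prod.swap
        (fun ij h => Finset.HasAntidiagonal.swap_mem_antidiagonal.2 h)
        (fun ij h => Finset.HasAntidiagonal.swap_mem_antidiagonal.2 h)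
        (fun _ _ => rfl) (fun _ _ => rfl) (fun _ _ => rfl)]
    rw [← Finset.sum_sub_distrib]
  constructor
  · intro hLie k hk x y
    have h := hLie.2 k x y
    rw [hLk k hk] at h
    simp only [LinearMap.add_apply] at h
    rw [hDlie k x y] at h
    have h2 : ∀ ij ∈ Finset.HasAntidiagonal.antidiagonal k,
        (L ij.1 x * L ij.2 y - L ij.2 y * L ij.1 x)
          = (D ij.1 x * D ij.2 y - D ij.2 y * D ij.1 x) := fun ij _ => hcomm _ _ x y
    rw [Finset.sum_congr rfl h2] at h
    exact add_eq_left.mp h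
  · intro hvan
    refine ⟨hL0, fun k x y => ?_⟩
    rcases Nat.eq_zero_or_pos k with hk | hk
    · subst hk
      simp [hL0, Finset.Nat.antidiagonal_zero]
    · rw [hLk k hk]
      simp only [LinearMap.add_apply]
      rw [hvan k hk x y, add_zero, hDlie k x y]
      exact (Finset.sum_congr rfl fun ij _ => (hcomm _ _ x y).symm)
end

section
/- Let 𝕜 be a commutative unital ring and let R be a 2-torsion free unital 𝕜-algebra with an idempotent e satisfying e ≠ 0 and e ≠ 1; put f = 1 − e. If L = {L_k}_{k∈ℕ₀} is a Lie higher derivation on R, then the off-diagonal Peirce components of L_k(1) vanish for every k ∈ ℕ₀: e·L_k(1)·f = 0 and f·L_k(1)·e = 0. -/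
open Finset

/-- For a Lie higher derivation `L` on a 2-torsion free unital
`𝕜`-algebra `R` with a nontrivial idempotent `e`, the off-diagonal Peirce components of
`L k 1` vanish: `e ⬝ L k 1 ⬝ f = 0` and `f ⬝ L k 1 ⬝ e = 0` where `f = 1 - e`. -/
theorem offdiagonal_of_one_vanishes {𝕜 R : Type*} [CommRing 𝕜] [Ring R] [Algebra 𝕜 R]
    (htf : ∀ x : R, x + x = 0 → x = 0)
    (e : R) (he : e * e = e) (he0 : e ≠ 0) (he1 : e ≠ 1)
    (L : ℕ → R →ₗ[𝕜] R) (hL : IsLieHigherDerivation 𝕜 R L) (k : ℕ) :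
    e * L k 1 * (1 - e) = 0 ∧ (1 - e) * L k 1 * e = 0 := by
  obtain ⟨h0, hcomm⟩ := hL
  have hid : ∀ x : R, L 0 x = x := fun x => by rw [h0]; rfl
  have central : ∀ n, ∀ x : R, L n 1 * x = x * L n 1 := by
    intro n
    induction n using Nat.strong_induction_on with
    | _ n ih =>
      intro x
      have h := hcomm n 1 x
      rw [one_mul, mul_one, sub_self, map_zero] at h
      have hsum : ∑ ij ∈ Finset.HasAntidiagonal.antidiagonal n,
          (L ij.1 1 * L ij.2 x - L ij.2 x * L ij.1 1) = L n 1 * x - x * L n 1 := by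
        rw [Finset.sum_eq_single (n, 0)]
        · rw [hid]
        · intro ij hij hne
          have hij' : ij.1 + ij.2 = n := Finset.HasAntidiagonal.mem_antidiagonal.mp hij
          rcases Nat.eq_zero_or_pos ij.1 with h1 | h1
          · have : L ij.1 (1 : R) = 1 := by rw [h1, hid]
            rw [this, one_mul, mul_one, sub_self]
          · have hlt : ij.1 < n := by
              rcases lt_or_eq_of_le (Nat.le.intro hij') with h2 | h2
              · exact h2
              · exfalso; apply hne
                have : ij.2 = 0 := by omega
                exact Prod.ext h2 this
            rw [ih ij.1 hlt (L ij.2 x), sub_self]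
        · intro hmem
          exact absurd (Finset.HasAntidiagonal.mem_antidiagonal.mpr (by simp)) hmem
      rw [hsum] at h
      exact sub_eq_zero.mp h.symm
  constructor
  · have : e * L k 1 = L k 1 * e := (central k e).symm
    rw [this, mul_assoc, mul_sub, mul_one, he, sub_self, mul_zero]
  · have : (1 - e) * L k 1 = L k 1 * (1 - e) := (central k (1 - e)).symm
    rw [this, mul_assoc, sub_mul, one_mul, he, sub_self, mul_zero]
end
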